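/- arXiv:2309.09103 — 4 statements merged into one kernel-verified Lean document; each statement's English description precedes it below -/
import Mathlib

section
/- Under the two-sample density ratio model with Conditions (ii) and (iii), the score function of the profile log empirical likelihood at the true parameter, ∂ℓ_n(θ*)/∂θ = −Σ_{k=0,1} Σ_{j=1}^{n_k} [n₁ exp(θ*ᵀ q(x_{kj})) / (n₀ + n₁ exp(θ*ᵀ q(x_{kj})))] q(x_{kj}) + Σ_{j=1}^{n₁} q(x_{1j}), has expectation zero: E[∂ℓ_n(θ*)/∂θ] = 0, where each x_{kj} is distributed according to G_k. -/
open MeasureTheory ProbabilityTheory Filter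
open scoped BigOperators NNReal ENNReal

noncomputable section

/-- The score function (gradient of the dual/profile log empirical likelihood
`ℓ_n(θ) = -Σ_{k,j} log[n₀ + n₁ exp(θᵀ q(x_{kj}))] + Σ_{j} θᵀ q(x_{1j})`)
of the two-sample density ratio model, evaluated at parameter `θ`. -/
def drmScore {Ω : Type*} (d : ℕ) (q : ℝ → Fin (d + 1) → ℝ)
    (X : Fin 2 → ℕ → Ω → ℝ) (n₀ n₁ : ℕ) (θ : Fin (d + 1) → ℝ) (ω : Ω)
    (i : Fin (d + 1)) : ℝ :=
  -(∑ k : Fin 2, ∑ j ∈ Finset.range (![n₀, n₁] k),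
      (n₁ : ℝ) * Real.exp (∑ l, θ l * q (X k j ω) l)
        / ((n₀ : ℝ) + (n₁ : ℝ) * Real.exp (∑ l, θ l * q (X k j ω) l))
        * q (X k j ω) i)
    + ∑ j ∈ Finset.range n₁, q (X 1 j ω) i

lemma abs_le_exp_add_exp (z : ℝ) : |z| ≤ Real.exp z + Real.exp (-z) := by
  have h1 := Real.add_one_le_exp z
  have h2 := Real.add_one_le_exp (-z)
  have h3 := Real.exp_pos z
  have h4 := Real.exp_pos (-z)
  rcases abs_cases z with ⟨h, _⟩ | ⟨h, _⟩ <;> rw [h] <;> nlinarith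

/-- Under the two-sample density ratio model with Conditions (ii) and (iii),
the score function of the profile log empirical likelihood at the true parameter has
expectation zero. -/
theorem drm_score_mean_zero
    (d : ℕ) {Ω : Type*} [MeasurableSpace Ω] (P : Measure Ω) [IsProbabilityMeasure P]
    (G : Fin 2 → Measure ℝ) [∀ k, IsProbabilityMeasure (G k)]
    (q : ℝ → Fin (d + 1) → ℝ) (hqmeas : Measurable q)
    (hq0 : ∀ x, q x 0 = 1)
    (θstar : Fin (d + 1) → ℝ)
    -- the density ratio model: dG₁ = exp(θ*ᵀ q) dG₀
    (hDRM : G 1 = (G 0).withDensity fun x => ENNReal.ofReal (Real.exp (∑ i, θstar i * q x i)))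
    -- independent samples, the j-th observation of sample k having law G_k
    (X : Fin 2 → ℕ → Ω → ℝ) (hXmeas : ∀ k j, Measurable (X k j))
    (hindep : iIndepFun (fun p : Fin 2 × ℕ => X p.1 p.2) P)
    (hlaw : ∀ k j, Measure.map (X k j) P = G k)
    (n₀ n₁ : ℕ) (hn₀ : 0 < n₀) (hn₁ : 0 < n₁)
    -- Condition (ii): E₀[q(X) qᵀ(X)] is positive definite
    (hii : (Matrix.of fun i j => ∫ x, q x i * q x j ∂(G 0)).PosDef)
    -- Condition (iii): the moment generating functions exist near θ* and near 0
    (hiii : ∃ ε > 0, ∀ θ : Fin (d + 1) → ℝ,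
      (Real.sqrt (∑ i, (θ i - θstar i) ^ 2) < ε ∨ Real.sqrt (∑ i, (θ i) ^ 2) < ε) →
      Integrable (fun x => Real.exp (∑ i, θ i * q x i)) (G 0) ∧
      Integrable (fun x => Real.exp (∑ i, θ i * q x i)) (G 1)) :
    ∀ i : Fin (d + 1), (∫ ω, drmScore d q X n₀ n₁ θstar ω i ∂P) = 0 := by
  intro i
  obtain ⟨ε, hε, hmgf⟩ := hiii
  set e : ℝ → ℝ := fun x => Real.exp (∑ l, θstar l * q x l) with he
  have hepos : ∀ x, 0 < e x := fun x => Real.exp_pos _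
  have hqi : Measurable fun x => q x i := (measurable_pi_apply i).comp hqmeas
  have hemeas : Measurable e := by
    exact Real.measurable_exp.comp
      (Finset.measurable_sum _ fun l _ =>
        measurable_const.mul ((measurable_pi_apply l).comp hqmeas))
  -- integrability of q · i under each G k
  have hqint : ∀ k : Fin 2, Integrable (fun x => q x i) (G k) := by
    intro k
    set t : ℝ := ε / 2 with ht'
    have ht : 0 < t := by positivity
    have key : ∀ s : ℝ, |s| < ε →
        Integrable (fun x => Real.exp (s * q x i)) (G k) := by
      intro s hs
      have hθ : Real.sqrt (∑ l, (if l = i then s else 0 : ℝ) ^ 2) < ε := by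
        have hsum : (∑ l : Fin (d+1), (if l = i then s else 0 : ℝ) ^ 2) = s ^ 2 := by
          rw [Finset.sum_eq_single i]
          · simp
          · intro b _ hb; simp [hb]
          · simp
        rw [hsum, Real.sqrt_sq_eq_abs]
        exact hs
      have hm := hmgf (fun l => if l = i then s else 0) (Or.inr hθ)
      have h2 : ∀ x, (∑ l, (if l = i then s else 0 : ℝ) * q x l) = s * q x i := by
        intro x
        rw [Finset.sum_eq_single i]
        · simp
        · intro b _ hb; simp [hb]
        · simp
      fin_cases k
      · exact (by simpa only [h2] using hm.1 : Integrable (fun x => Real.exp (s * q x i)) (G 0))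
      · exact (by simpa only [h2] using hm.2 : Integrable (fun x => Real.exp (s * q x i)) (G 1))
    have h1 := key t (by rw [abs_of_pos ht]; linarith)
    have h2 := key (-t) (by rw [abs_neg, abs_of_pos ht]; linarith)
    have hbound : ∀ x, ‖q x i‖ ≤
        ‖(Real.exp (t * q x i) + Real.exp (-t * q x i)) / t‖ := by
      intro x
      have hab := abs_le_exp_add_exp (t * q x i)
      have e1 := Real.exp_pos (t * q x i)
      have e2 := Real.exp_pos (-(t * q x i))
      rw [Real.norm_eq_abs, Real.norm_eq_abs, abs_div, abs_of_pos ht,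
        abs_of_pos (by positivity : (0:ℝ) < Real.exp (t * q x i) + Real.exp (-t * q x i))]
      rw [le_div_iff₀ ht]
      rw [abs_mul, abs_of_pos ht, mul_comm t |q x i|] at hab
      calc |q x i| * t ≤ Real.exp (t * q x i) + Real.exp (-(t * q x i)) := hab
        _ = Real.exp (t * q x i) + Real.exp (-t * q x i) := by ring_nf
    exact (((h1.add (by simpa using h2)).div_const t).mono
      hqi.aestronglyMeasurable (Filter.Eventually.of_forall hbound))
  -- the weight function
  set w : ℝ → ℝ := fun x => (n₁ : ℝ) * e x / ((n₀ : ℝ) + (n₁ : ℝ) * e x) * q x i with hw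
  have hden : ∀ x, 0 < (n₀ : ℝ) + (n₁ : ℝ) * e x := by
    intro x
    have := hepos x
    have : (0:ℝ) < n₀ := by exact_mod_cast hn₀
    positivity
  have hwmeas : Measurable w :=
    ((measurable_const.mul hemeas).div (measurable_const.add (measurable_const.mul hemeas))).mul hqi
  have hwint : ∀ k : Fin 2, Integrable w (G k) := by
    intro k
    refine (hqint k).mono hwmeas.aestronglyMeasurable (Filter.Eventually.of_forall fun x => ?_)
    rw [Real.norm_eq_abs, Real.norm_eq_abs, hw]
    simp only
    rw [abs_mul]
    have h1 : 0 ≤ (n₁ : ℝ) * e x / ((n₀ : ℝ) + (n₁ : ℝ) * e x) := by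
      apply div_nonneg _ (hden x).le
      positivity
    have h2 : (n₁ : ℝ) * e x / ((n₀ : ℝ) + (n₁ : ℝ) * e x) ≤ 1 := by
      rw [div_le_one (hden x)]
      have : (0:ℝ) ≤ n₀ := by positivity
      linarith
    rw [abs_of_nonneg h1]
    nlinarith [abs_nonneg (q x i)]
  -- density transfer
  have hnn : Measurable fun x => Real.toNNReal (e x) := hemeas.real_toNNReal
  have hDRM' : G 1 = (G 0).withDensity fun x => ((Real.toNNReal (e x) : ℝ≥0) : ℝ≥0∞) := by
    rw [hDRM]; rfl
  have hsmul : ∀ f : ℝ → ℝ, ∀ x, (Real.toNNReal (e x)) • f x = e x * f x := by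
    intro f x
    rw [NNReal.smul_def, Real.coe_toNNReal _ (hepos x).le, smul_eq_mul]
  have hI1 : ∫ x, w x ∂(G 1) = ∫ x, e x * w x ∂(G 0) := by
    rw [hDRM', integral_withDensity_eq_integral_smul hnn]
    exact integral_congr_ae (Filter.Eventually.of_forall fun x => hsmul w x)
  have hJ : ∫ x, q x i ∂(G 1) = ∫ x, e x * q x i ∂(G 0) := by
    rw [hDRM', integral_withDensity_eq_integral_smul hnn]
    exact integral_congr_ae (Filter.Eventually.of_forall fun x => hsmul (fun x => q x i) x)
  have hewint : Integrable (fun x => e x * w x) (G 0) := by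
    have h0 : Integrable w ((G 0).withDensity fun x => ((Real.toNNReal (e x) : ℝ≥0) : ℝ≥0∞)) := by
      rw [← hDRM']; exact hwint 1
    have := (integrable_withDensity_iff_integrable_smul hnn).1 h0
    exact this.congr (Filter.Eventually.of_forall fun x => hsmul w x)
  have heqint : Integrable (fun x => e x * q x i) (G 0) := by
    have h0 : Integrable (fun x => q x i)
        ((G 0).withDensity fun x => ((Real.toNNReal (e x) : ℝ≥0) : ℝ≥0∞)) := by
      rw [← hDRM']; exact hqint 1
    have := (integrable_withDensity_iff_integrable_smul hnn).1 h0
    exact this.congr (Filter.Eventually.of_forall fun x => hsmul (fun x => q x i) x)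
  -- key identity
  have hkey : (n₀ : ℝ) * ∫ x, w x ∂(G 0) + (n₁ : ℝ) * ∫ x, e x * w x ∂(G 0)
      = (n₁ : ℝ) * ∫ x, e x * q x i ∂(G 0) := by
    rw [← integral_const_mul, ← integral_const_mul, ← integral_const_mul,
      ← integral_add ((hwint 0).const_mul _) (hewint.const_mul _)]
    refine integral_congr_ae (Filter.Eventually.of_forall fun x => ?_)
    have hd := (hden x).ne'
    simp only [hw]
    field_simp [hw]
  -- transfer integrals over P to integrals over G k
  have hcomp_eq : ∀ (f : ℝ → ℝ), Measurable f → ∀ (k : Fin 2) (j : ℕ),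
      ∫ ω, f (X k j ω) ∂P = ∫ x, f x ∂(G k) := by
    intro f hf k j
    rw [← hlaw k j, integral_map (hXmeas k j).aemeasurable hf.aestronglyMeasurable]
  have hcomp_int : ∀ (f : ℝ → ℝ), Measurable f → ∀ (k : Fin 2) (j : ℕ),
      Integrable f (G k) → Integrable (fun ω => f (X k j ω)) P := by
    intro f hf k j hint
    rw [← hlaw k j] at hint
    exact (integrable_map_measure hf.aestronglyMeasurable (hXmeas k j).aemeasurable).1 hint
  -- rewrite the score
  have hscore : (fun ω => drmScore d q X n₀ n₁ θstar ω i)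
      = fun ω => -((∑ j ∈ Finset.range n₀, w (X 0 j ω)) + ∑ j ∈ Finset.range n₁, w (X 1 j ω))
        + ∑ j ∈ Finset.range n₁, q (X 1 j ω) i := by
    funext ω
    simp [drmScore, Fin.sum_univ_two, hw, he]
  have hA : Integrable (fun ω => ∑ j ∈ Finset.range n₀, w (X 0 j ω)) P :=
    integrable_finset_sum _ fun j _ => hcomp_int w hwmeas 0 j (hwint 0)
  have hB : Integrable (fun ω => ∑ j ∈ Finset.range n₁, w (X 1 j ω)) P :=
    integrable_finset_sum _ fun j _ => hcomp_int w hwmeas 1 j (hwint 1)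
  have hC : Integrable (fun ω => ∑ j ∈ Finset.range n₁, q (X 1 j ω) i) P :=
    integrable_finset_sum _ fun j _ => hcomp_int _ hqi 1 j (hqint 1)
  have hAB : Integrable (fun ω => (∑ j ∈ Finset.range n₀, w (X 0 j ω))
      + ∑ j ∈ Finset.range n₁, w (X 1 j ω)) P := hA.add hB
  have hneg : Integrable (fun ω => -((∑ j ∈ Finset.range n₀, w (X 0 j ω))
      + ∑ j ∈ Finset.range n₁, w (X 1 j ω))) P := hAB.neg
  rw [hscore, integral_add hneg hC, integral_neg, integral_add hA hB,
    integral_finset_sum _ (fun j _ => hcomp_int w hwmeas 0 j (hwint 0)),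
    integral_finset_sum _ (fun j _ => hcomp_int w hwmeas 1 j (hwint 1)),
    integral_finset_sum _ (fun j _ => hcomp_int _ hqi 1 j (hqint 1))]
  simp only [hcomp_eq w hwmeas, hcomp_eq _ hqi, Finset.sum_const, Finset.card_range,
    nsmul_eq_mul]
  rw [hI1, hJ] at *
  linarith [hkey]


end
end

section
/- Under the two-sample density ratio model with Conditions (i)–(iii), the normalized negative Hessian of the profile log empirical likelihood at the true parameter converges in probability: −n₁^{−1} ∂²ℓ_n(θ*)/∂θ∂θᵀ →p E₁[q(X) qᵀ(X)] as n₀, n₁ → ∞ with n₀/n₁ → ∞; in particular the limit is positive definite. -/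
open MeasureTheory ProbabilityTheory Filter
open scoped BigOperators Topology ENNReal NNReal

noncomputable section


lemma drm_sq_le_exp {t : ℝ} (ht : 0 < t) (x : ℝ) :
    x ^ 2 ≤ 4 / t ^ 2 * (Real.exp (t * x) + Real.exp (-(t * x))) := by
  have h1 : Real.exp (t * |x|) ≤ Real.exp (t * x) + Real.exp (-(t * x)) := by
    rcases abs_cases x with ⟨h, _⟩ | ⟨h, _⟩
    · rw [h]; exact le_add_of_nonneg_right (Real.exp_pos _).le
    · rw [h, mul_neg, ← neg_mul]
      exact le_add_of_nonneg_left (Real.exp_pos _).le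
  have hy : 0 ≤ t * |x| := by positivity
  have h2 : (t * |x| / 2) ^ 2 ≤ Real.exp (t * |x|) := by
    have ha : t * |x| / 2 + 1 ≤ Real.exp (t * |x| / 2) := Real.add_one_le_exp _
    have hb : (Real.exp (t * |x| / 2)) ^ 2 = Real.exp (t * |x|) := by
      rw [← Real.exp_nat_mul]; ring_nf
    nlinarith [Real.exp_pos (t * |x| / 2)]
  have h3 : t ^ 2 * x ^ 2 / 4 ≤ Real.exp (t * x) + Real.exp (-(t * x)) := by
    nlinarith [sq_abs x]
  rw [div_mul_eq_mul_div, le_div_iff₀ (by positivity : (0:ℝ) < t ^ 2)]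
  nlinarith

lemma drm_integrable_exp_mul_sq {μ : Measure ℝ} {g h : ℝ → ℝ} (hg : Measurable g)
    (hh : Measurable h) {t : ℝ} (ht : 0 < t)
    (h1 : Integrable (fun x => Real.exp (g x + t * h x)) μ)
    (h2 : Integrable (fun x => Real.exp (g x - t * h x)) μ) :
    Integrable (fun x => Real.exp (g x) * (h x) ^ 2) μ := by
  refine Integrable.mono' ((h1.add h2).const_mul (4 / t ^ 2))
    ((hg.exp.mul (hh.pow_const 2)).aestronglyMeasurable) (Filter.Eventually.of_forall fun x => ?_)
  rw [Real.norm_eq_abs, abs_of_nonneg (by positivity)]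
  have := drm_sq_le_exp ht (h x)
  have h4 : Real.exp (g x) * (h x) ^ 2 ≤
      Real.exp (g x) * (4 / t ^ 2 * (Real.exp (t * h x) + Real.exp (-(t * h x)))) :=
    mul_le_mul_of_nonneg_left this (Real.exp_nonneg _)
  calc Real.exp (g x) * (h x) ^ 2 ≤ _ := h4
    _ = 4 / t ^ 2 * (Real.exp (g x + t * h x) + Real.exp (g x - t * h x)) := by
        rw [Real.exp_add, Real.exp_sub]
        rw [Real.exp_neg]
        field_simp

lemma drm_integrable_weight_mul {μ : Measure ℝ} {w f g : ℝ → ℝ} (hw : Measurable w)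
    (hw0 : ∀ x, 0 ≤ w x) (hf : Measurable f) (hg : Measurable g)
    (h1 : Integrable (fun x => w x * f x ^ 2) μ) (h2 : Integrable (fun x => w x * g x ^ 2) μ) :
    Integrable (fun x => w x * |f x * g x|) μ := by
  refine Integrable.mono' ((h1.add h2).const_mul (1 / 2))
    ((hw.mul (hf.mul hg).abs).aestronglyMeasurable) (Filter.Eventually.of_forall fun x => ?_)
  rw [Real.norm_eq_abs, abs_of_nonneg (mul_nonneg (hw0 x) (abs_nonneg _))]
  have h3 : |f x * g x| ≤ (f x ^ 2 + g x ^ 2) / 2 := by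
    rw [abs_mul]
    nlinarith [sq_nonneg (|f x| - |g x|), sq_abs (f x), sq_abs (g x), abs_nonneg (f x),
      abs_nonneg (g x)]
  simp only [Pi.add_apply]
  nlinarith [mul_le_mul_of_nonneg_left h3 (hw0 x)]

lemma drm_key0 {N₀ N₁ e b c : ℝ} (h0 : 1 ≤ N₀) (h1 : 1 ≤ N₁) (he : 0 < e) :
    |N₁⁻¹ * (N₀ * N₁ * e / (N₀ + N₁ * e) ^ 2 * b * c) - e * (b * c) / N₀| ≤
      N₁ / N₀ * (2 * (e ^ 2 * |b * c|) / N₀) := by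
  have hN0 : (0:ℝ) < N₀ := lt_of_lt_of_le one_pos h0
  have hN1 : (0:ℝ) < N₁ := lt_of_lt_of_le one_pos h1
  have hD : (0:ℝ) < N₀ + N₁ * e := by positivity
  have e1 : N₁⁻¹ * (N₀ * N₁ * e / (N₀ + N₁ * e) ^ 2 * b * c) - e * (b * c) / N₀ =
      (b * c) * (N₀ * e / (N₀ + N₁ * e) ^ 2 - e / N₀) := by
    field_simp
  rw [e1, abs_mul]
  have e2 : |N₀ * e / (N₀ + N₁ * e) ^ 2 - e / N₀| ≤ N₁ / N₀ * (2 * e ^ 2 / N₀) := by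
    rw [abs_sub_comm, abs_of_nonneg]
    · rw [div_sub_div _ _ hN0.ne' (by positivity : ((N₀ + N₁ * e) ^ 2 : ℝ) ≠ 0),
        div_le_iff₀ (by positivity)]
      have : N₁ / N₀ * (2 * e ^ 2 / N₀) = 2 * N₁ * e ^ 2 / N₀ ^ 2 := by
        field_simp
      rw [this, div_mul_eq_mul_div, le_div_iff₀ (by positivity : (0:ℝ) < N₀ ^ 2)]
      have hA : (0:ℝ) ≤ 3 * N₀ ^ 2 * N₁ ^ 2 * e ^ 3 + 2 * N₀ * N₁ ^ 3 * e ^ 4 := by positivity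
      nlinarith [hA]
    · rw [sub_nonneg, div_le_div_iff₀ (by positivity) hN0]
      have hB : (0:ℝ) ≤ e * (2 * N₀ * (N₁ * e) + (N₁ * e) ^ 2) := by positivity
      nlinarith [hB]
  calc |b * c| * |N₀ * e / (N₀ + N₁ * e) ^ 2 - e / N₀| ≤ |b * c| * (N₁ / N₀ * (2 * e ^ 2 / N₀)) :=
        mul_le_mul_of_nonneg_left e2 (abs_nonneg _)
    _ = N₁ / N₀ * (2 * (e ^ 2 * |b * c|) / N₀) := by ring

lemma drm_key1 {N₀ N₁ e b c : ℝ} (h0 : 1 ≤ N₀) (h1 : 1 ≤ N₁) (he : 0 < e) :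
    |N₁⁻¹ * (N₀ * N₁ * e / (N₀ + N₁ * e) ^ 2 * b * c)| ≤ N₁ / N₀ * (e * |b * c| / N₁) := by
  have hN0 : (0:ℝ) < N₀ := lt_of_lt_of_le one_pos h0
  have hN1 : (0:ℝ) < N₁ := lt_of_lt_of_le one_pos h1
  have hD : (0:ℝ) < N₀ + N₁ * e := by positivity
  have e1 : N₁⁻¹ * (N₀ * N₁ * e / (N₀ + N₁ * e) ^ 2 * b * c) =
      (b * c) * (N₀ * e / (N₀ + N₁ * e) ^ 2) := by field_simp
  have e2 : N₁ / N₀ * (e * |b * c| / N₁) = |b * c| * (e / N₀) := by field_simp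
  rw [e1, e2, abs_mul, abs_of_nonneg (by positivity : (0:ℝ) ≤ N₀ * e / (N₀ + N₁ * e) ^ 2)]
  refine mul_le_mul_of_nonneg_left ?_ (abs_nonneg _)
  rw [div_le_div_iff₀ (by positivity) hN0]
  have hB : (0:ℝ) ≤ e * (2 * N₀ * (N₁ * e) + (N₁ * e) ^ 2) := by positivity
  nlinarith [hB]

lemma drm_aux_integrable {μ : Measure ℝ} {d : ℕ} {q : ℝ → Fin (d + 1) → ℝ}
    (hq : ∀ a, Measurable fun x => q x a) (c : Fin (d + 1) → ℝ) (i : Fin (d + 1)) {t : ℝ}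
    (ht : 0 < t)
    (h1 : Integrable (fun x => Real.exp (∑ a, (c a + if a = i then t else 0) * q x a)) μ)
    (h2 : Integrable (fun x => Real.exp (∑ a, (c a + if a = i then -t else 0) * q x a)) μ) :
    Integrable (fun x => Real.exp (∑ a, c a * q x a) * (q x i) ^ 2) μ := by
  have hg : Measurable fun x => ∑ a, c a * q x a :=
    Finset.measurable_sum _ fun a _ => (hq a).const_mul _
  apply drm_integrable_exp_mul_sq hg (hq i) ht
  · have e : ∀ x : ℝ, (∑ a, (c a + if a = i then t else 0) * q x a) =
        (∑ a, c a * q x a) + t * q x i := by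
      intro x
      simp [add_mul, Finset.sum_add_distrib, ite_mul]
    simpa only [e] using h1
  · have e : ∀ x : ℝ, (∑ a, (c a + if a = i then -t else 0) * q x a) =
        (∑ a, c a * q x a) - t * q x i := by
      intro x
      simp [add_mul, Finset.sum_add_distrib, ite_mul, sub_eq_add_neg]
    simpa only [e] using h2

lemma drm_quad {d : ℕ} {q : ℝ → Fin (d + 1) → ℝ} (μ : Measure ℝ)
    (hint : ∀ i j, Integrable (fun x => q x i * q x j) μ) (v : Fin (d + 1) → ℝ) :
    dotProduct v ((Matrix.of fun i j => ∫ x, q x i * q x j ∂μ).mulVec v) = ∫ x, (∑ a, v a * q x a) ^ 2 ∂μ ∧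
      Integrable (fun x => (∑ a, v a * q x a) ^ 2) μ := by
  have hexp : ∀ x, (∑ a, v a * q x a) ^ 2 = ∑ a, ∑ b, v a * v b * (q x a * q x b) := by
    intro x
    rw [sq, Finset.sum_mul_sum]
    exact Finset.sum_congr rfl fun a _ => Finset.sum_congr rfl fun b _ => by ring
  have hint2 : ∀ a b, Integrable (fun x => v a * v b * (q x a * q x b)) μ := fun a b =>
    (hint a b).const_mul _
  have hi : Integrable (fun x => ∑ a, ∑ b, v a * v b * (q x a * q x b)) μ :=
    integrable_finset_sum _ fun a _ => integrable_finset_sum _ fun b _ => hint2 a b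
  constructor
  · have h1 : ∫ x, (∑ a, v a * q x a) ^ 2 ∂μ = ∑ a, ∑ b, v a * v b * ∫ x, q x a * q x b ∂μ := by
      simp only [hexp]
      rw [integral_finset_sum _ fun a _ => integrable_finset_sum _ fun b _ => hint2 a b]
      refine Finset.sum_congr rfl fun a _ => ?_
      rw [integral_finset_sum _ fun b _ => hint2 a b]
      exact Finset.sum_congr rfl fun b _ => integral_const_mul _ _
    rw [h1]
    simp only [dotProduct, Matrix.mulVec, Matrix.of_apply, Finset.mul_sum]
    exact Finset.sum_congr rfl fun a _ => Finset.sum_congr rfl fun b _ => by ring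
  · exact hi.congr (Filter.Eventually.of_forall fun x => (hexp x).symm)



/-- The normalized negative Hessian `-n₁⁻¹ ∂²ℓ_n(θ)/∂θ∂θᵀ` of the dual/profile log empirical
likelihood `ℓ_n(θ) = -Σ_{k,j} log[n₀ + n₁ exp(θᵀ q(x_{kj}))] + Σ_j θᵀ q(x_{1j})` of the
two-sample density ratio model. -/
def drmScaledNegHess {Ω : Type*} (d : ℕ) (q : ℝ → Fin (d + 1) → ℝ)
    (X : Fin 2 → ℕ → Ω → ℝ) (n₀ n₁ : ℕ) (θ : Fin (d + 1) → ℝ) (ω : Ω)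
    (i j : Fin (d + 1)) : ℝ :=
  (n₁ : ℝ)⁻¹ * ∑ k : Fin 2, ∑ l ∈ Finset.range (![n₀, n₁] k),
    (n₀ : ℝ) * (n₁ : ℝ) * Real.exp (∑ a, θ a * q (X k l ω) a)
      / ((n₀ : ℝ) + (n₁ : ℝ) * Real.exp (∑ a, θ a * q (X k l ω) a)) ^ 2
      * q (X k l ω) i * q (X k l ω) j

/-- Under the two-sample density ratio model with Conditions (i)–(iii),
the normalized negative Hessian of the profile log empirical likelihood at the true
parameter converges in probability to `E₁[q(X) qᵀ(X)]` (entrywise), and the limit matrix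
is positive definite. -/
theorem drm_neg_hessian_lln
    (d : ℕ) {Ω : Type*} [MeasurableSpace Ω] (P : Measure Ω) [IsProbabilityMeasure P]
    (G : Fin 2 → Measure ℝ) [∀ k, IsProbabilityMeasure (G k)]
    (q : ℝ → Fin (d + 1) → ℝ) (hqmeas : Measurable q)
    (hq0 : ∀ x, q x 0 = 1)
    (θstar : Fin (d + 1) → ℝ)
    (hDRM : G 1 = (G 0).withDensity fun x => ENNReal.ofReal (Real.exp (∑ i, θstar i * q x i)))
    (X : Fin 2 → ℕ → Ω → ℝ) (hXmeas : ∀ k j, Measurable (X k j))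
    (hindep : iIndepFun (fun p : Fin 2 × ℕ => X p.1 p.2) P)
    (hlaw : ∀ k j, Measure.map (X k j) P = G k)
    -- Condition (i)
    (n₀ n₁ : ℕ → ℕ)
    (hn₀ : Tendsto (fun n => (n₀ n : ℝ)) atTop atTop)
    (hn₁ : Tendsto (fun n => (n₁ n : ℝ)) atTop atTop)
    (hratio : Tendsto (fun n => (n₀ n : ℝ) / (n₁ n : ℝ)) atTop atTop)
    -- Condition (ii)
    (hii : (Matrix.of fun i j => ∫ x, q x i * q x j ∂(G 0)).PosDef)
    -- Condition (iii)
    (hiii : ∃ ε > 0, ∀ θ : Fin (d + 1) → ℝ,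
      (Real.sqrt (∑ i, (θ i - θstar i) ^ 2) < ε ∨ Real.sqrt (∑ i, (θ i) ^ 2) < ε) →
      Integrable (fun x => Real.exp (∑ i, θ i * q x i)) (G 0) ∧
      Integrable (fun x => Real.exp (∑ i, θ i * q x i)) (G 1)) :
    (∀ i j : Fin (d + 1),
      TendstoInMeasure P
        (fun n ω => drmScaledNegHess d q X (n₀ n) (n₁ n) θstar ω i j) atTop
        (fun _ => ∫ x, q x i * q x j ∂(G 1))) ∧
    (Matrix.of fun i j => ∫ x, q x i * q x j ∂(G 1)).PosDef := by
  classical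
  obtain ⟨ε, hε, hεint⟩ := hiii
  have hqm : ∀ a, Measurable fun x => q x a := fun a => (measurable_pi_apply a).comp hqmeas
  have hgm : Measurable fun x => ∑ a, θstar a * q x a :=
    Finset.measurable_sum _ fun a _ => (hqm a).const_mul _
  have hEm : Measurable fun x => Real.exp (∑ a, θstar a * q x a) := hgm.exp
  -- withDensity transfer
  have hwd_int : ∀ f : ℝ → ℝ, Measurable f →
      (Integrable f (G 1) ↔
        Integrable (fun x => Real.exp (∑ a, θstar a * q x a) * f x) (G 0)) := by
    intro f hf
    rw [hDRM, integrable_withDensity_iff (hgm.exp.ennreal_ofReal)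
      (Filter.Eventually.of_forall fun x => ENNReal.ofReal_lt_top)]
    simp only [ENNReal.toReal_ofReal (Real.exp_nonneg _)]
    constructor
    · intro h; exact h.congr (Filter.Eventually.of_forall fun x => mul_comm _ _)
    · intro h; exact h.congr (Filter.Eventually.of_forall fun x => mul_comm _ _)
  have hwd_eq : ∀ f : ℝ → ℝ,
      ∫ x, f x ∂(G 1) = ∫ x, Real.exp (∑ a, θstar a * q x a) * f x ∂(G 0) := by
    intro f
    rw [hDRM]
    have hd : (fun x => ENNReal.ofReal (Real.exp (∑ a, θstar a * q x a))) =
        fun x => ((Real.exp (∑ a, θstar a * q x a)).toNNReal : ℝ≥0∞) := rfl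
    rw [hd, integral_withDensity_eq_integral_smul
      (show Measurable fun x => (Real.exp (∑ a, θstar a * q x a)).toNNReal from
        measurable_real_toNNReal.comp hgm.exp) f]
    refine integral_congr_ae (Filter.Eventually.of_forall fun x => ?_)
    simp [NNReal.smul_def, Real.coe_toNNReal _ (Real.exp_nonneg _)]
  -- integrability from Condition (iii)
  set t : ℝ := ε / 2 with hteq
  have ht : 0 < t := by positivity
  have hsq_ite : ∀ (i : Fin (d + 1)) (s : ℝ), (∑ a, (if a = i then s else 0) ^ 2) = s ^ 2 := by
    intro i s
    rw [Finset.sum_congr rfl (g := fun a => if a = i then s ^ 2 else 0)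
      (fun a _ => by by_cases h : a = i <;> simp [h])]
    simp
  have hnear : ∀ (i : Fin (d + 1)) (s : ℝ), |s| < ε →
      (Integrable (fun x => Real.exp (∑ a, (θstar a + if a = i then s else 0) * q x a)) (G 0) ∧
        Integrable (fun x => Real.exp (∑ a, (θstar a + if a = i then s else 0) * q x a)) (G 1)) ∧
      (Integrable (fun x => Real.exp (∑ a, (0 + if a = i then s else 0) * q x a)) (G 0) ∧
        Integrable (fun x => Real.exp (∑ a, (0 + if a = i then s else 0) * q x a)) (G 1)) := by
    intro i s hs
    constructor
    · refine hεint (fun a => θstar a + if a = i then s else 0) (Or.inl ?_)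
      have h1 : ∀ a : Fin (d + 1), (θstar a + (if a = i then s else 0) - θstar a) ^ 2
          = (if a = i then s else 0) ^ 2 := fun a => by ring_nf
      rw [Finset.sum_congr rfl fun a _ => h1 a, hsq_ite, Real.sqrt_sq_eq_abs]
      exact hs
    · have h2 := hεint (fun a => if a = i then s else 0) (Or.inr (by
        rw [hsq_ite, Real.sqrt_sq_eq_abs]; exact hs))
      simpa only [zero_add] using h2
  have htlt : |t| < ε := by rw [abs_of_pos ht]; linarith
  have hmtlt : |(-t)| < ε := by rw [abs_neg, abs_of_pos ht]; linarith
  -- basic weighted-square integrabilities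
  have hEq : ∀ (k : Fin 2) (i : Fin (d + 1)),
      Integrable (fun x => Real.exp (∑ a, θstar a * q x a) * q x i ^ 2) (G k) := by
    intro k i
    fin_cases k
    · exact drm_aux_integrable hqm θstar i ht ((hnear i t htlt).1.1) ((hnear i (-t) hmtlt).1.1)
    · exact drm_aux_integrable hqm θstar i ht ((hnear i t htlt).1.2) ((hnear i (-t) hmtlt).1.2)
  have hq2 : ∀ (k : Fin 2) (i : Fin (d + 1)), Integrable (fun x => q x i ^ 2) (G k) := by
    intro k i
    have h0 : ∀ m : Measure ℝ,
        Integrable (fun x => Real.exp (∑ a, (0 : ℝ) * q x a) * q x i ^ 2) m →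
        Integrable (fun x => q x i ^ 2) m := by
      intro m h; simpa using h
    fin_cases k
    · exact h0 _ (drm_aux_integrable hqm (fun _ => 0) i ht ((hnear i t htlt).2.1)
        ((hnear i (-t) hmtlt).2.1))
    · exact h0 _ (drm_aux_integrable hqm (fun _ => 0) i ht ((hnear i t htlt).2.2)
        ((hnear i (-t) hmtlt).2.2))
  have hE2q : ∀ i : Fin (d + 1),
      Integrable (fun x => Real.exp (∑ a, θstar a * q x a) ^ 2 * q x i ^ 2) (G 0) := by
    intro i
    have h := (hwd_int (fun x => Real.exp (∑ a, θstar a * q x a) * q x i ^ 2)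
      (hEm.mul ((hqm i).pow_const 2))).mp (hEq 1 i)
    exact h.congr (Filter.Eventually.of_forall fun x => by ring)
  -- product integrabilities
  have habs_to : ∀ {μ : Measure ℝ} {u w : ℝ → ℝ}, Measurable w → Integrable u μ →
      (∀ x, |w x| ≤ u x) → Integrable w μ := fun hw hu hb =>
    hu.mono' hw.aestronglyMeasurable (Filter.Eventually.of_forall fun x => by
      rw [Real.norm_eq_abs]; exact hb x)
  have hf1abs : ∀ i j : Fin (d + 1),
      Integrable (fun x => Real.exp (∑ a, θstar a * q x a) * |q x i * q x j|) (G 0) :=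
    fun i j => drm_integrable_weight_mul hEm (fun x => (Real.exp_pos _).le) (hqm i) (hqm j)
      (hEq 0 i) (hEq 0 j)
  have hf1int : ∀ i j : Fin (d + 1),
      Integrable (fun x => Real.exp (∑ a, θstar a * q x a) * (q x i * q x j)) (G 0) := by
    intro i j
    refine habs_to (hEm.mul ((hqm i).mul (hqm j))) (hf1abs i j) fun x => ?_
    rw [abs_mul, abs_of_nonneg (Real.exp_nonneg _)]
  have hf2int : ∀ i j : Fin (d + 1),
      Integrable (fun x => Real.exp (∑ a, θstar a * q x a) ^ 2 * |q x i * q x j|) (G 0) :=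
    fun i j => drm_integrable_weight_mul (hEm.pow_const 2) (fun x => sq_nonneg _)
      (hqm i) (hqm j) (hE2q i) (hE2q j)
  have hf3int : ∀ i j : Fin (d + 1),
      Integrable (fun x => Real.exp (∑ a, θstar a * q x a) * |q x i * q x j|) (G 1) :=
    fun i j => drm_integrable_weight_mul hEm (fun x => (Real.exp_pos _).le) (hqm i) (hqm j)
      (hEq 1 i) (hEq 1 j)
  have hqqint : ∀ (k : Fin 2) (i j : Fin (d + 1)),
      Integrable (fun x => q x i * q x j) (G k) := by
    intro k i j
    have habs : Integrable (fun x => (1 : ℝ) * |q x i * q x j|) (G k) :=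
      drm_integrable_weight_mul measurable_const (fun _ => zero_le_one) (hqm i) (hqm j)
        (by simpa using hq2 k i) (by simpa using hq2 k j)
    refine habs_to ((hqm i).mul (hqm j)) habs fun x => ?_
    rw [one_mul]
  -- strong law of large numbers
  have lln : ∀ (k : Fin 2) (f : ℝ → ℝ), Measurable f → Integrable f (G k) →
      ∀ᵐ ω ∂P, Tendsto (fun m : ℕ => (∑ l ∈ Finset.range m, f (X k l ω)) / m) atTop
        (𝓝 (∫ x, f x ∂(G k))) := by
    intro k f hf hfint
    have h0 : Integrable (fun ω => f (X k 0 ω)) P := by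
      rw [← hlaw k 0] at hfint
      exact (integrable_map_measure hf.aestronglyMeasurable (hXmeas k 0).aemeasurable).mp hfint
    have hident : ∀ l, IdentDistrib (fun ω => f (X k l ω)) (fun ω => f (X k 0 ω)) P P := by
      intro l
      have hb : IdentDistrib (X k l) (X k 0) P P :=
        ⟨(hXmeas k l).aemeasurable, (hXmeas k 0).aemeasurable, by rw [hlaw, hlaw]⟩
      exact hb.comp hf
    have hpind : Pairwise (Function.onFun (fun u v => IndepFun u v P) fun l ω => f (X k l ω)) := by
      intro l l' hll'
      exact (hindep.indepFun (i := (k, l)) (j := (k, l')) (by simp [hll'])).comp hf hf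
    have hsl := strong_law_ae_real _ h0 hpind hident
    have heq : ∫ ω, f (X k 0 ω) ∂P = ∫ x, f x ∂(G k) := by
      rw [← hlaw k 0, integral_map (hXmeas k 0).aemeasurable hf.aestronglyMeasurable]
    rw [heq] at hsl
    exact hsl
  have hn₀' : Tendsto n₀ atTop atTop := tendsto_natCast_atTop_iff.mp hn₀
  have hn₁' : Tendsto n₁ atTop atTop := tendsto_natCast_atTop_iff.mp hn₁
  have hρ : Tendsto (fun n => (n₁ n : ℝ) / (n₀ n : ℝ)) atTop (𝓝 0) := by
    have h := hratio.inv_tendsto_atTop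
    rwa [show (fun n => (n₀ n : ℝ) / (n₁ n : ℝ))⁻¹ = fun n => (n₁ n : ℝ) / (n₀ n : ℝ) from
      funext fun n => by simp [Pi.inv_apply, inv_div]] at h
  constructor
  · intro i j
    have hmeasA : ∀ n, AEStronglyMeasurable
        (fun ω => drmScaledNegHess d q X (n₀ n) (n₁ n) θstar ω i j) P := by
      intro n
      apply Measurable.aestronglyMeasurable
      unfold drmScaledNegHess
      apply Measurable.const_mul
      refine Finset.measurable_sum _ fun k _ => Finset.measurable_sum _ fun l _ => ?_
      have hexp : Measurable fun ω => Real.exp (∑ a, θstar a * q (X k l ω) a) :=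
        (Finset.measurable_sum _ fun a _ => ((hqm a).comp (hXmeas k l)).const_mul _).exp
      exact (((hexp.const_mul _).div
        (((hexp.const_mul _).const_add _).pow_const 2)).mul
        ((hqm i).comp (hXmeas k l))).mul ((hqm j).comp (hXmeas k l))
    refine tendstoInMeasure_of_tendsto_ae hmeasA ?_
    filter_upwards [lln 0 _ (hEm.mul ((hqm i).mul (hqm j))) (hf1int i j),
      lln 0 _ ((hEm.pow_const 2).mul ((hqm i).mul (hqm j)).abs) (hf2int i j),
      lln 1 _ (hEm.mul ((hqm i).mul (hqm j)).abs) (hf3int i j)] with ω hw1 hw2 hw3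
    have hS : Tendsto (fun n => (∑ l ∈ Finset.range (n₀ n),
        Real.exp (∑ a, θstar a * q (X 0 l ω) a) * (q (X 0 l ω) i * q (X 0 l ω) j))
          / (n₀ n : ℝ)) atTop
        (𝓝 (∫ x, Real.exp (∑ a, θstar a * q x a) * (q x i * q x j) ∂(G 0))) :=
      hw1.comp hn₀'
    have hT : Tendsto (fun n => (∑ l ∈ Finset.range (n₀ n),
        Real.exp (∑ a, θstar a * q (X 0 l ω) a) ^ 2 * |q (X 0 l ω) i * q (X 0 l ω) j|)
          / (n₀ n : ℝ)) atTop
        (𝓝 (∫ x, Real.exp (∑ a, θstar a * q x a) ^ 2 * |q x i * q x j| ∂(G 0))) :=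
      hw2.comp hn₀'
    have hU : Tendsto (fun n => (∑ l ∈ Finset.range (n₁ n),
        Real.exp (∑ a, θstar a * q (X 1 l ω) a) * |q (X 1 l ω) i * q (X 1 l ω) j|)
          / (n₁ n : ℝ)) atTop
        (𝓝 (∫ x, Real.exp (∑ a, θstar a * q x a) * |q x i * q x j| ∂(G 1))) :=
      hw3.comp hn₁'
    show Tendsto _ atTop (𝓝 (∫ x, q x i * q x j ∂(G 1)))
    rw [hwd_eq (fun x => q x i * q x j)]
    have hg0 : Tendsto (fun n => (n₁ n : ℝ) / (n₀ n : ℝ) *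
        (2 * ((∑ l ∈ Finset.range (n₀ n),
            Real.exp (∑ a, θstar a * q (X 0 l ω) a) ^ 2 * |q (X 0 l ω) i * q (X 0 l ω) j|)
          / (n₀ n : ℝ)) +
          (∑ l ∈ Finset.range (n₁ n),
            Real.exp (∑ a, θstar a * q (X 1 l ω) a) * |q (X 1 l ω) i * q (X 1 l ω) j|)
          / (n₁ n : ℝ))) atTop (𝓝 0) := by
      have h := hρ.mul ((hT.const_mul 2).add hU)
      simpa using h
    have hdiff : Tendsto (fun n =>
        drmScaledNegHess d q X (n₀ n) (n₁ n) θstar ω i j -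
        (∑ l ∈ Finset.range (n₀ n),
          Real.exp (∑ a, θstar a * q (X 0 l ω) a) * (q (X 0 l ω) i * q (X 0 l ω) j))
          / (n₀ n : ℝ)) atTop (𝓝 0) := by
      refine squeeze_zero_norm' ?_ hg0
      filter_upwards [hn₀'.eventually_ge_atTop 1, hn₁'.eventually_ge_atTop 1] with n hn0 hn1
      have hN0 : (1 : ℝ) ≤ (n₀ n : ℝ) := by exact_mod_cast hn0
      have hN1 : (1 : ℝ) ≤ (n₁ n : ℝ) := by exact_mod_cast hn1
      simp only [drmScaledNegHess, Fin.sum_univ_two, Matrix.cons_val_zero, Matrix.cons_val_one,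
        Matrix.head_cons, Fin.isValue]
      have e1 : ((n₁ n : ℝ))⁻¹ *
          ((∑ l ∈ Finset.range (n₀ n),
            (n₀ n : ℝ) * (n₁ n : ℝ) * Real.exp (∑ a, θstar a * q (X 0 l ω) a)
              / ((n₀ n : ℝ) + (n₁ n : ℝ) * Real.exp (∑ a, θstar a * q (X 0 l ω) a)) ^ 2
              * q (X 0 l ω) i * q (X 0 l ω) j) +
           ∑ l ∈ Finset.range (n₁ n),
            (n₀ n : ℝ) * (n₁ n : ℝ) * Real.exp (∑ a, θstar a * q (X 1 l ω) a)
              / ((n₀ n : ℝ) + (n₁ n : ℝ) * Real.exp (∑ a, θstar a * q (X 1 l ω) a)) ^ 2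
              * q (X 1 l ω) i * q (X 1 l ω) j) -
          (∑ l ∈ Finset.range (n₀ n),
            Real.exp (∑ a, θstar a * q (X 0 l ω) a) * (q (X 0 l ω) i * q (X 0 l ω) j))
            / (n₀ n : ℝ)
          =
          (∑ l ∈ Finset.range (n₀ n),
            (((n₁ n : ℝ))⁻¹ *
              ((n₀ n : ℝ) * (n₁ n : ℝ) * Real.exp (∑ a, θstar a * q (X 0 l ω) a)
              / ((n₀ n : ℝ) + (n₁ n : ℝ) * Real.exp (∑ a, θstar a * q (X 0 l ω) a)) ^ 2
              * q (X 0 l ω) i * q (X 0 l ω) j) -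
              Real.exp (∑ a, θstar a * q (X 0 l ω) a) * (q (X 0 l ω) i * q (X 0 l ω) j)
                / (n₀ n : ℝ))) +
          ∑ l ∈ Finset.range (n₁ n),
            ((n₁ n : ℝ))⁻¹ *
              ((n₀ n : ℝ) * (n₁ n : ℝ) * Real.exp (∑ a, θstar a * q (X 1 l ω) a)
              / ((n₀ n : ℝ) + (n₁ n : ℝ) * Real.exp (∑ a, θstar a * q (X 1 l ω) a)) ^ 2
              * q (X 1 l ω) i * q (X 1 l ω) j) := by
        rw [Finset.sum_sub_distrib, ← Finset.mul_sum, ← Finset.mul_sum, ← Finset.sum_div]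
        ring
      rw [e1, Real.norm_eq_abs]
      have hb0 : ∀ l ∈ Finset.range (n₀ n),
          |((n₁ n : ℝ))⁻¹ *
              ((n₀ n : ℝ) * (n₁ n : ℝ) * Real.exp (∑ a, θstar a * q (X 0 l ω) a)
              / ((n₀ n : ℝ) + (n₁ n : ℝ) * Real.exp (∑ a, θstar a * q (X 0 l ω) a)) ^ 2
              * q (X 0 l ω) i * q (X 0 l ω) j) -
              Real.exp (∑ a, θstar a * q (X 0 l ω) a) * (q (X 0 l ω) i * q (X 0 l ω) j)
                / (n₀ n : ℝ)| ≤
            (n₁ n : ℝ) / (n₀ n : ℝ) *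
              (2 * (Real.exp (∑ a, θstar a * q (X 0 l ω) a) ^ 2
                * |q (X 0 l ω) i * q (X 0 l ω) j|) / (n₀ n : ℝ)) := by
        intro l _
        have h := drm_key0 (b := q (X 0 l ω) i) (c := q (X 0 l ω) j) hN0 hN1
          (Real.exp_pos (∑ a, θstar a * q (X 0 l ω) a))
        convert h using 3 <;> ring
      have hb1 : ∀ l ∈ Finset.range (n₁ n),
          |((n₁ n : ℝ))⁻¹ *
              ((n₀ n : ℝ) * (n₁ n : ℝ) * Real.exp (∑ a, θstar a * q (X 1 l ω) a)
              / ((n₀ n : ℝ) + (n₁ n : ℝ) * Real.exp (∑ a, θstar a * q (X 1 l ω) a)) ^ 2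
              * q (X 1 l ω) i * q (X 1 l ω) j)| ≤
            (n₁ n : ℝ) / (n₀ n : ℝ) *
              (Real.exp (∑ a, θstar a * q (X 1 l ω) a) * |q (X 1 l ω) i * q (X 1 l ω) j|
                / (n₁ n : ℝ)) := by
        intro l _
        exact drm_key1 hN0 hN1 (Real.exp_pos _)
      refine le_trans (abs_add_le _ _) (le_trans (add_le_add
        (le_trans (Finset.abs_sum_le_sum_abs _ _) (Finset.sum_le_sum hb0))
        (le_trans (Finset.abs_sum_le_sum_abs _ _) (Finset.sum_le_sum hb1)))
        (le_of_eq ?_))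
      rw [← Finset.mul_sum, ← Finset.mul_sum, ← mul_add]
      congr 1
      rw [← Finset.sum_div, ← Finset.sum_div, ← Finset.mul_sum, mul_div_assoc]
    have hfinal := hdiff.add hS
    rw [zero_add] at hfinal
    refine hfinal.congr fun n => ?_
    ring
  · -- positive definiteness
    refine Matrix.PosDef.of_dotProduct_mulVec_pos ?_ ?_
    · unfold Matrix.IsHermitian
      ext i j
      simp only [Matrix.conjTranspose_apply, Matrix.of_apply, star_trivial]
      refine integral_congr_ae (Filter.Eventually.of_forall fun x => ?_)
      ring
    · intro v hv
      have hstar : star v = v := by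
        funext a; simp
      rw [hstar, (drm_quad (G 1) (hqqint 1) v).1]
      have hnn : (0 : ℝ → ℝ) ≤ᵐ[G 1] fun x => (∑ a, v a * q x a) ^ 2 :=
        Filter.Eventually.of_forall fun x => sq_nonneg _
      have hnn0 : (0 : ℝ → ℝ) ≤ᵐ[G 0] fun x => (∑ a, v a * q x a) ^ 2 :=
        Filter.Eventually.of_forall fun x => sq_nonneg _
      rw [integral_pos_iff_support_of_nonneg_ae hnn (drm_quad (G 1) (hqqint 1) v).2]
      have hpos0 : 0 < (G 0) (Function.support fun x => (∑ a, v a * q x a) ^ 2) := by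
        rw [← integral_pos_iff_support_of_nonneg_ae hnn0 (drm_quad (G 0) (hqqint 0) v).2]
        have h2 := hii.dotProduct_mulVec_pos hv
        rwa [show star v = v from funext fun a => by simp,
          (drm_quad (G 0) (hqqint 0) v).1] at h2
      have hac : G 0 ≪ G 1 := by
        rw [hDRM]
        refine withDensity_absolutelyContinuous'
          (hgm.exp.ennreal_ofReal.aemeasurable)
          (Filter.Eventually.of_forall fun x => ?_)
        simp [ENNReal.ofReal_eq_zero, not_le, Real.exp_pos]
      rw [pos_iff_ne_zero]
      intro h0
      rw [hac h0] at hpos0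
      exact lt_irrefl _ hpos0

end
end

section
/- In the two-sample exponential family model, assume that for k = 0, 1 the maximum likelihood estimators satisfy √n_k (η̃_k − η_k*) →d N(0, Var_k^{−1}[q₋(X)]) with Var_k[q₋(X)] positive definite, and that A is differentiable at η_k* with ∇A(η_k*) = −E_k[q₋(X)]. If n₁/n₀ → 0 as n₀, n₁ → ∞, then the maximum likelihood estimator θ̃ = (A(η̃₁) − A(η̃₀), (η̃₁ − η̃₀)ᵀ)ᵀ of the DRM parameter satisfies √n₁ (θ̃ − θ*) →d N(0, J Var₁^{−1}[q₋(X)] Jᵀ), where J is the d×(d−1) matrix whose first row is −E₁[q₋(X)]ᵀ and whose remaining d−1 rows form the (d−1)×(d−1) identity matrix. -/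
open MeasureTheory ProbabilityTheory Filter
open scoped BigOperators Topology

noncomputable section

/-- The normalizing constant `A(η) = -log ∫ B(x) exp(ηᵀ q₋(x)) dx` of the exponential family. -/
def expFamA (m : ℕ) (B : ℝ → ℝ) (qm : ℝ → Fin m → ℝ) (η : Fin m → ℝ) : ℝ :=
  -Real.log (∫ x, B x * Real.exp (∑ i, η i * qm x i))

/-- The exponential family density `g(x; η) = B(x) exp(ηᵀ q₋(x) + A(η))`. -/
def expFamDensity (m : ℕ) (B : ℝ → ℝ) (qm : ℝ → Fin m → ℝ) (η : Fin m → ℝ) (x : ℝ) : ℝ :=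
  B x * Real.exp ((∑ i, η i * qm x i) + expFamA m B qm η)

/-- The exponential family distribution with natural parameter `η` (w.r.t. Lebesgue measure). -/
def expFamMeasure (m : ℕ) (B : ℝ → ℝ) (qm : ℝ → Fin m → ℝ) (η : Fin m → ℝ) : Measure ℝ :=
  MeasureTheory.volume.withDensity fun x => ENNReal.ofReal (expFamDensity m B qm η x)

namespace DRMProof

variable {Ω : Type*} [MeasurableSpace Ω]

/-- convergence to zero in probability (eventual form) -/
def TendsToZeroInProb (P : Measure Ω) (Z : ℕ → Ω → ℝ) : Prop :=
  ∀ ε > (0:ℝ), ∀ δ > (0:ℝ), ∀ᶠ n in atTop, P {ω | ε ≤ |Z n ω|} ≤ ENNReal.ofReal δ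

/-- stochastic boundedness (eventual tightness) -/
def TightSeq (P : Measure Ω) (W : ℕ → Ω → ℝ) : Prop :=
  ∀ δ > (0:ℝ), ∃ M > (0:ℝ), ∀ᶠ n in atTop, P {ω | M ≤ |W n ω|} ≤ ENNReal.ofReal δ

variable {P : Measure Ω}

lemma TendsToZeroInProb.congr' {Z Z' : ℕ → Ω → ℝ} (h : ∀ᶠ n in atTop, Z n = Z' n)
    (hZ : TendsToZeroInProb P Z) : TendsToZeroInProb P Z' := by
  intro ε hε δ hδ
  filter_upwards [h, hZ ε hε δ hδ] with n h1 h2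
  rwa [← h1]

lemma TendsToZeroInProb.add {Z W : ℕ → Ω → ℝ} (hZ : TendsToZeroInProb P Z)
    (hW : TendsToZeroInProb P W) : TendsToZeroInProb P (fun n ω => Z n ω + W n ω) := by
  intro ε hε δ hδ
  filter_upwards [hZ (ε/2) (by linarith) (δ/2) (by linarith),
    hW (ε/2) (by linarith) (δ/2) (by linarith)] with n h1 h2
  have hsub : {ω | ε ≤ |Z n ω + W n ω|} ⊆ {ω | ε/2 ≤ |Z n ω|} ∪ {ω | ε/2 ≤ |W n ω|} := by
    intro ω hω
    simp only [Set.mem_setOf_eq] at hω ⊢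
    by_contra hcon
    simp only [Set.mem_union, Set.mem_setOf_eq, not_or] at hcon
    push_neg at hcon
    have := abs_add_le (Z n ω) (W n ω)
    nlinarith [hcon.1, hcon.2]
  calc P {ω | ε ≤ |Z n ω + W n ω|} ≤ P ({ω | ε/2 ≤ |Z n ω|} ∪ {ω | ε/2 ≤ |W n ω|}) :=
        measure_mono hsub
    _ ≤ P {ω | ε/2 ≤ |Z n ω|} + P {ω | ε/2 ≤ |W n ω|} := measure_union_le _ _
    _ ≤ ENNReal.ofReal (δ/2) + ENNReal.ofReal (δ/2) := add_le_add h1 h2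
    _ = ENNReal.ofReal δ := by rw [← ENNReal.ofReal_add (by linarith) (by linarith)]; ring_nf

lemma TendsToZeroInProb.neg {Z : ℕ → Ω → ℝ} (hZ : TendsToZeroInProb P Z) :
    TendsToZeroInProb P (fun n ω => -(Z n ω)) := by
  intro ε hε δ hδ
  filter_upwards [hZ ε hε δ hδ] with n h1
  simpa [abs_neg] using h1

/-- multiplying by an eventually bounded deterministic sequence -/
lemma TendsToZeroInProb.mul_bounded {Z : ℕ → Ω → ℝ} (c : ℕ → ℝ) (K : ℝ) (hK : 0 < K)
    (hc : ∀ᶠ n in atTop, |c n| ≤ K) (hZ : TendsToZeroInProb P Z) :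
    TendsToZeroInProb P (fun n ω => c n * Z n ω) := by
  intro ε hε δ hδ
  filter_upwards [hc, hZ (ε/K) (by positivity) δ hδ] with n h1 h2
  refine le_trans (measure_mono ?_) h2
  intro ω hω
  simp only [Set.mem_setOf_eq, abs_mul] at hω ⊢
  by_contra hcon
  push_neg at hcon
  have t1 : |c n| * |Z n ω| ≤ K * |Z n ω| := mul_le_mul_of_nonneg_right h1 (abs_nonneg _)
  have t2 : K * |Z n ω| < K * (ε/K) := mul_lt_mul_of_pos_left hcon hK
  rw [mul_div_cancel₀ _ (ne_of_gt hK)] at t2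
  exact absurd hω (not_le.2 (lt_of_le_of_lt t1 t2))

/-- a vanishing deterministic sequence times a tight sequence tends to zero in probability -/
lemma tendsToZeroInProb_of_tendsto_zero_mul_tight {W : ℕ → Ω → ℝ} (c : ℕ → ℝ)
    (hc : Tendsto c atTop (𝓝 0)) (hW : TightSeq P W) :
    TendsToZeroInProb P (fun n ω => c n * W n ω) := by
  intro ε hε δ hδ
  obtain ⟨M, hM, hMev⟩ := hW δ hδ
  have hcev : ∀ᶠ n in atTop, |c n| < ε / M := by
    have := Metric.tendsto_nhds.1 hc (ε/M) (by positivity)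
    simpa [Real.dist_eq] using this
  filter_upwards [hcev, hMev] with n h1 h2
  refine le_trans (measure_mono ?_) h2
  intro ω hω
  simp only [Set.mem_setOf_eq, abs_mul] at hω ⊢
  by_contra hcon
  push_neg at hcon
  have t1 : |c n| * |W n ω| ≤ |c n| * M := mul_le_mul_of_nonneg_left hcon.le (abs_nonneg _)
  have t2 : |c n| * M < (ε/M) * M := mul_lt_mul_of_pos_right h1 hM
  rw [div_mul_cancel₀ _ (ne_of_gt hM)] at t2
  exact absurd hω (not_le.2 (lt_of_le_of_lt t1 t2))

lemma norm_exp_I_mul_real (x : ℝ) : ‖Complex.exp (Complex.I * x)‖ = 1 := by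
  rw [Complex.norm_exp]
  simp

lemma integrable_bdd {E : Type*} [NormedAddCommGroup E] {α : Type*} [MeasurableSpace α]
    {μ : Measure α} [IsFiniteMeasure μ]
    {f : α → E} (hf : AEStronglyMeasurable f μ) (C : ℝ)
    (h : ∀ ω, ‖f ω‖ ≤ C) : Integrable f μ :=
  (integrable_const C).mono' hf (Filter.Eventually.of_forall h)

lemma integrable_exp_I_mul [IsProbabilityMeasure P] {Z : Ω → ℝ} (hZ : Measurable Z) :
    Integrable (fun ω => Complex.exp (Complex.I * (Z ω : ℂ))) P := by
  refine integrable_bdd ?_ 1 (fun ω => le_of_eq (norm_exp_I_mul_real _))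
  exact (Complex.measurable_exp.comp ((measurable_const.mul
    (Complex.measurable_ofReal.comp hZ)))).aestronglyMeasurable

lemma slutsky_char [IsProbabilityMeasure P] {X Z : ℕ → Ω → ℝ} (hX : ∀ n, Measurable (X n)) (hZm : ∀ n, Measurable (Z n))
    {c : ℂ}
    (hXc : Tendsto (fun n => ∫ ω, Complex.exp (Complex.I * (X n ω : ℂ)) ∂P) atTop (𝓝 c))
    (hZ0 : TendsToZeroInProb P Z) :
    Tendsto (fun n => ∫ ω, Complex.exp (Complex.I * ((X n ω + Z n ω : ℝ) : ℂ)) ∂P) atTop (𝓝 c)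
    := by
  have key : Tendsto (fun n => (∫ ω, Complex.exp (Complex.I * ((X n ω + Z n ω : ℝ) : ℂ)) ∂P)
      - ∫ ω, Complex.exp (Complex.I * (X n ω : ℂ)) ∂P) atTop (𝓝 0) := by
    rw [NormedAddCommGroup.tendsto_nhds_zero]
    intro ε hε
    set ε' : ℝ := min (ε/8) 1 with hε'def
    have hε' : 0 < ε' := by positivity
    have hε'le : ε' ≤ ε/8 := min_le_left _ _
    have hε'1 : ε' ≤ 1 := min_le_right _ _
    filter_upwards [hZ0 ε' hε' (ε/8) (by positivity)] with n hn
    have hIsum : Integrable (fun ω => Complex.exp (Complex.I * ((X n ω + Z n ω : ℝ) : ℂ))) P :=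
      integrable_exp_I_mul ((hX n).add (hZm n))
    have hIX : Integrable (fun ω => Complex.exp (Complex.I * (X n ω : ℂ))) P :=
      integrable_exp_I_mul (hX n)
    rw [← integral_sub hIsum hIX]
    have hbound : ∀ ω, ‖Complex.exp (Complex.I * ((X n ω + Z n ω : ℝ) : ℂ))
        - Complex.exp (Complex.I * (X n ω : ℂ))‖
        ≤ ‖Complex.exp (Complex.I * (Z n ω : ℂ)) - 1‖ := by
      intro ω
      have : Complex.exp (Complex.I * ((X n ω + Z n ω : ℝ) : ℂ))
          - Complex.exp (Complex.I * (X n ω : ℂ))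
          = Complex.exp (Complex.I * (X n ω : ℂ)) * (Complex.exp (Complex.I * (Z n ω : ℂ)) - 1)
          := by
        push_cast
        rw [mul_add, Complex.exp_add]
        ring
      rw [this, norm_mul, norm_exp_I_mul_real, one_mul]
    have hg : Integrable (fun ω => ‖Complex.exp (Complex.I * (Z n ω : ℂ)) - 1‖) P := by
      refine (integrable_bdd ?_ 2 ?_).norm
      · exact ((integrable_exp_I_mul (hZm n)).sub (integrable_const 1)).aestronglyMeasurable
      · intro ω
        calc ‖Complex.exp (Complex.I * (Z n ω : ℂ)) - 1‖
            ≤ ‖Complex.exp (Complex.I * (Z n ω : ℂ))‖ + ‖(1:ℂ)‖ := norm_sub_le _ _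
          _ ≤ 2 := by rw [norm_exp_I_mul_real]; norm_num
    calc ‖∫ ω, (Complex.exp (Complex.I * ((X n ω + Z n ω : ℝ) : ℂ))
            - Complex.exp (Complex.I * (X n ω : ℂ))) ∂P‖
        ≤ ∫ ω, ‖Complex.exp (Complex.I * ((X n ω + Z n ω : ℝ) : ℂ))
            - Complex.exp (Complex.I * (X n ω : ℂ))‖ ∂P := norm_integral_le_integral_norm _
      _ ≤ ∫ ω, ‖Complex.exp (Complex.I * (Z n ω : ℂ)) - 1‖ ∂P := by
          refine integral_mono ?_ hg hbound
          exact (hIsum.sub hIX).norm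
      _ < ε := by
          set S := {ω | ε' ≤ |Z n ω|} with hSdef
          have hSmeas : MeasurableSet S :=
            measurableSet_le measurable_const ((hZm n).abs)
          have hfint : Integrable (fun ω => ‖Complex.exp (Complex.I * (Z n ω : ℂ)) - 1‖) P := hg
          rw [← integral_add_compl hSmeas hfint]
          have h1 : ∫ ω in S, ‖Complex.exp (Complex.I * (Z n ω : ℂ)) - 1‖ ∂P
              ≤ 2 * (P S).toReal := by
            have := setIntegral_mono_on hfint.integrableOn
              (integrableOn_const (C := (2:ℝ)) (measure_lt_top P S).ne) hSmeas
              (fun ω _ => by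
                calc ‖Complex.exp (Complex.I * (Z n ω : ℂ)) - 1‖
                    ≤ ‖Complex.exp (Complex.I * (Z n ω : ℂ))‖ + ‖(1:ℂ)‖ := norm_sub_le _ _
                  _ ≤ 2 := by rw [norm_exp_I_mul_real]; norm_num)
            rwa [setIntegral_const, smul_eq_mul, mul_comm, measureReal_def] at this
          have h2 : ∫ ω in Sᶜ, ‖Complex.exp (Complex.I * (Z n ω : ℂ)) - 1‖ ∂P
              ≤ 2 * ε' := by
            have hb : ∀ ω ∈ Sᶜ, ‖Complex.exp (Complex.I * (Z n ω : ℂ)) - 1‖ ≤ 2 * ε' := by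
              intro ω hω
              simp only [hSdef, Set.mem_compl_iff, Set.mem_setOf_eq, not_le] at hω
              have habs : ‖Complex.I * (Z n ω : ℂ)‖ = |Z n ω| := by
                simp
              have hle1 : ‖Complex.I * (Z n ω : ℂ)‖ ≤ 1 := by
                rw [habs]; exact le_trans hω.le hε'1
              have := Complex.norm_exp_sub_one_le hle1
              rw [habs] at this
              calc ‖Complex.exp (Complex.I * (Z n ω : ℂ)) - 1‖ ≤ 2 * |Z n ω| := this
                _ ≤ 2 * ε' := by linarith
            have := setIntegral_mono_on hfint.integrableOn
              (integrableOn_const (C := 2*ε') (measure_lt_top P Sᶜ).ne) hSmeas.compl hb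
            calc ∫ ω in Sᶜ, ‖Complex.exp (Complex.I * (Z n ω : ℂ)) - 1‖ ∂P
                ≤ ∫ _ω in Sᶜ, (2*ε') ∂P := this
              _ = (P Sᶜ).toReal * (2*ε') := by rw [setIntegral_const, smul_eq_mul, measureReal_def]
              _ ≤ 1 * (2*ε') := by
                  refine mul_le_mul_of_nonneg_right ?_ (by positivity)
                  have : P Sᶜ ≤ 1 := prob_le_one
                  exact (ENNReal.toReal_le_of_le_ofReal one_pos.le (by simpa using this))
              _ = 2*ε' := one_mul _
          have hPS : (P S).toReal ≤ ε/8 :=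
            ENNReal.toReal_le_of_le_ofReal (by positivity) hn
          have : (0:ℝ) ≤ ∫ ω in Sᶜ, ‖Complex.exp (Complex.I * (Z n ω : ℂ)) - 1‖ ∂P :=
            integral_nonneg (fun ω => norm_nonneg _)
          calc (∫ ω in S, ‖Complex.exp (Complex.I * (Z n ω : ℂ)) - 1‖ ∂P)
                + ∫ ω in Sᶜ, ‖Complex.exp (Complex.I * (Z n ω : ℂ)) - 1‖ ∂P
              ≤ 2 * (P S).toReal + 2 * ε' := add_le_add h1 h2
            _ ≤ 2 * (ε/8) + 2 * (ε/8) := by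
                have := mul_le_mul_of_nonneg_left hPS (by norm_num : (0:ℝ) ≤ 2)
                have := mul_le_mul_of_nonneg_left hε'le (by norm_num : (0:ℝ) ≤ 2)
                linarith
            _ < ε := by linarith
  have : (fun n => ∫ ω, Complex.exp (Complex.I * ((X n ω + Z n ω : ℝ) : ℂ)) ∂P)
      = fun n => ((∫ ω, Complex.exp (Complex.I * ((X n ω + Z n ω : ℝ) : ℂ)) ∂P)
        - ∫ ω, Complex.exp (Complex.I * (X n ω : ℂ)) ∂P) + ∫ ω, Complex.exp (Complex.I * (X n ω : ℂ)) ∂P := by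
    funext n; ring
  rw [this]
  simpa using key.add hXc


/-- Tightness from pointwise convergence of characteristic functions to a Gaussian one. -/
lemma tight_of_char [IsProbabilityMeasure P] {Y : ℕ → Ω → ℝ} (hY : ∀ n, Measurable (Y n)) (σ2 : ℝ)
    (h : ∀ s : ℝ, Tendsto (fun n => ∫ ω, Complex.exp (Complex.I * ((s * Y n ω : ℝ) : ℂ)) ∂P)
      atTop (𝓝 (Complex.exp ((-(s^2*σ2)/2 : ℝ) : ℂ)))) :
    TightSeq P Y := by
  intro δ hδ
  set ε' : ℝ := δ/3 with hε'def
  have hε' : 0 < ε' := by positivity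
  -- real characteristic function
  set φ : ℕ → ℝ → ℝ := fun n s => ∫ ω, Real.cos (s * Y n ω) ∂P with hφdef
  set ψ : ℝ → ℝ := fun s => Real.exp (-(s^2*σ2)/2) with hψdef
  have hcosInt : ∀ n s, Integrable (fun ω => Real.cos (s * Y n ω)) P := fun n s =>
    integrable_bdd ((Real.measurable_cos.comp ((hY n).const_mul s)).aestronglyMeasurable) 1
      (fun ω => by rw [Real.norm_eq_abs]; exact Real.abs_cos_le_one _)
  have hexpInt : ∀ n s, Integrable (fun ω => Complex.exp (Complex.I * ((s * Y n ω : ℝ) : ℂ))) P := by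
    intro n s
    refine integrable_bdd ?_ 1 (fun ω => le_of_eq (norm_exp_I_mul_real _))
    exact (Complex.measurable_exp.comp (measurable_const.mul
      (Complex.measurable_ofReal.comp ((hY n).const_mul s)))).aestronglyMeasurable
  have hφlim : ∀ s, Tendsto (fun n => φ n s) atTop (𝓝 (ψ s)) := by
    intro s
    have hre := (Complex.continuous_re.tendsto _).comp (h s)
    have h1 : (fun n => (∫ ω, Complex.exp (Complex.I * ((s * Y n ω : ℝ) : ℂ)) ∂P).re)
        = fun n => φ n s := by
      funext n
      have hint := integral_re (hexpInt n s)
      simp only [RCLike.re_to_complex] at hint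
      rw [← hint]
      congr 1
      funext ω
      simp [Complex.exp_re]
    have h2 : (Complex.exp ((-(s^2*σ2)/2 : ℝ) : ℂ)).re = ψ s := by
      norm_cast
    rw [Function.comp_def] at hre
    rw [h1] at hre
    rwa [h2] at hre
  have hφbdd : ∀ n s, |φ n s| ≤ 1 := by
    intro n s
    have h0 : |φ n s| = ‖∫ ω, Real.cos (s * Y n ω) ∂P‖ := by rw [Real.norm_eq_abs]
    rw [h0]
    refine le_trans (norm_integral_le_integral_norm _) ?_
    calc ∫ ω, ‖Real.cos (s * Y n ω)‖ ∂P ≤ ∫ (_ : Ω), (1:ℝ) ∂P := by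
          refine integral_mono (hcosInt n s).norm (integrable_const 1) ?_
          intro ω; simp only [Real.norm_eq_abs]; exact Real.abs_cos_le_one _
      _ = 1 := by simp
  -- choose r by continuity of ψ at 0
  have hψcont : ContinuousAt ψ 0 := by
    apply Continuous.continuousAt
    fun_prop
  have hψ0 : ψ 0 = 1 := by simp [hψdef]
  obtain ⟨r₀, hr₀, hr₀prop⟩ := Metric.continuousAt_iff.1 hψcont ε' hε'
  set r : ℝ := r₀/2 with hrdef
  have hr : 0 < r := by positivity
  have hψnear : ∀ s : ℝ, |s| ≤ r → |ψ s - 1| ≤ ε' := by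
    intro s hs
    have : dist s 0 < r₀ := by
      rw [Real.dist_eq, sub_zero]; linarith
    have := hr₀prop this
    rw [Real.dist_eq, hψ0] at this
    exact this.le
  set ν : Measure ℝ := volume.restrict (Set.Ioc (-r) r) with hνdef
  haveI hνfin : IsFiniteMeasure ν := by
    constructor
    rw [hνdef, Measure.restrict_apply_univ, Real.volume_Ioc]
    exact ENNReal.ofReal_lt_top
  have hνuniv : (ν Set.univ).toReal = 2*r := by
    rw [hνdef, Measure.restrict_apply_univ, Real.volume_Ioc, ENNReal.toReal_ofReal (by linarith)]
    ring
  refine ⟨2/r, by positivity, ?_⟩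
  -- Fubini identity
  have key : ∀ n, r * (P {ω | 2/r ≤ |Y n ω|}).toReal ≤ ∫ s, (1 - φ n s) ∂ν := by
    intro n
    have hjoint : Integrable (fun p : Ω × ℝ => 1 - Real.cos (p.2 * Y n p.1)) (P.prod ν) := by
      refine integrable_bdd ?_ 2 ?_
      · exact (measurable_const.sub (Real.measurable_cos.comp
          (measurable_snd.mul ((hY n).comp measurable_fst)))).aestronglyMeasurable
      · intro p
        rw [Real.norm_eq_abs]
        have := Real.abs_cos_le_one (p.2 * Y n p.1)
        rw [abs_sub_comm, abs_le]
        constructor <;> [linarith [abs_le.1 this]; linarith [abs_le.1 this]]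
    have hswap := integral_integral_swap (f := fun ω s => 1 - Real.cos (s * Y n ω))
      (μ := P) (ν := ν) hjoint
    have hinner_eq : ∀ s, ∫ ω, (1 - Real.cos (s * Y n ω)) ∂P = 1 - φ n s := by
      intro s
      rw [integral_sub (integrable_const 1) (hcosInt n s)]
      simp [hφdef]
    have hRHS : ∫ s, ∫ ω, (1 - Real.cos (s * Y n ω)) ∂P ∂ν = ∫ s, (1 - φ n s) ∂ν := by
      congr 1; funext s; exact hinner_eq s
    rw [← hRHS, ← hswap]
    -- lower bound the inner integral pointwise in ω
    set S := {ω | 2/r ≤ |Y n ω|} with hSdef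
    have hSmeas : MeasurableSet S := measurableSet_le measurable_const ((hY n).abs)
    have hlow : ∀ ω, Set.indicator S (fun _ => r) ω ≤ ∫ s, (1 - Real.cos (s * Y n ω)) ∂ν := by
      intro ω
      set c : ℝ := Y n ω with hcdef
      have hnonneg : (0:ℝ) ≤ ∫ s, (1 - Real.cos (s * c)) ∂ν := by
        refine integral_nonneg ?_
        intro s
        simp only [Pi.zero_apply]
        linarith [Real.cos_le_one (s * c)]
      by_cases hω : ω ∈ S
      · rw [Set.indicator_of_mem hω]
        have hc2 : 2/r ≤ |c| := hω
        have hc0 : c ≠ 0 := by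
          intro h0
          rw [h0] at hc2
          simp at hc2
          have h2r : (0:ℝ) < 2/r := by positivity
          linarith
        -- compute the integral
        have hcomp : ∫ s, (1 - Real.cos (s * c)) ∂ν
            = 2*r - (Real.sin (r*c) - Real.sin (-r*c))/c := by
          rw [hνdef, ← intervalIntegral.integral_of_le (by linarith : -r ≤ r)]
          have hci : IntervalIntegrable (fun s => Real.cos (s*c)) MeasureTheory.volume (-r) r :=
            Continuous.intervalIntegrable (by fun_prop) _ _
          rw [intervalIntegral.integral_sub intervalIntegrable_const hci]
          rw [intervalIntegral.integral_const]
          rw [intervalIntegral.integral_comp_mul_right Real.cos hc0]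
          rw [integral_cos]
          simp only [smul_eq_mul]
          rw [neg_mul]
          field_simp
          ring_nf
          try exact Or.inl trivial
        rw [hcomp]
        have hsin1 : |Real.sin (r*c)| ≤ 1 := Real.abs_sin_le_one _
        have hsin2 : |Real.sin (-r*c)| ≤ 1 := Real.abs_sin_le_one _
        have habs : |(Real.sin (r*c) - Real.sin (-r*c))/c| ≤ 2/|c| := by
          rw [abs_div]
          refine (div_le_div_iff_of_pos_right (abs_pos.2 hc0)).2 ?_
          calc |Real.sin (r*c) - Real.sin (-r*c)| ≤ |Real.sin (r*c)| + |Real.sin (-r*c)| :=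
              abs_sub _ _
            _ ≤ 2 := by linarith
        have h2c : 2/|c| ≤ r := by
          rw [div_le_iff₀ (abs_pos.2 hc0)]
          have := mul_le_mul_of_nonneg_left hc2 (le_of_lt hr)
          calc (2:ℝ) = r * (2/r) := by field_simp
            _ ≤ r * |c| := this
        have := (abs_le.1 (le_trans habs h2c)).2
        have hle := (abs_le.1 (le_trans habs h2c)).1
        linarith [(abs_le.1 (le_trans habs h2c)).2]
      · rw [Set.indicator_of_notMem hω]
        exact hnonneg
    have hIint : Integrable (fun ω => ∫ s, (1 - Real.cos (s * Y n ω)) ∂ν) P := by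
      have := hjoint.integral_prod_left
      simpa using this
    have hIind : Integrable (Set.indicator S (fun _ => r)) P :=
      (integrable_const r).indicator hSmeas
    have := integral_mono hIind hIint hlow
    rwa [integral_indicator_const _ hSmeas, smul_eq_mul, mul_comm, measureReal_def] at this
  -- the limit of ∫ (1 - φ n) is small
  have hφmeas : ∀ n, AEStronglyMeasurable (fun s => 1 - φ n s) ν := by
    intro n
    refine (stronglyMeasurable_const.sub ?_).aestronglyMeasurable
    exact MeasureTheory.StronglyMeasurable.integral_prod_right
      (f := fun s ω => Real.cos (s * Y n ω))
      ((Real.measurable_cos.comp (measurable_fst.mul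
        ((hY n).comp measurable_snd))).stronglyMeasurable)
  have hconv : Tendsto (fun n => ∫ s, (1 - φ n s) ∂ν) atTop (𝓝 (∫ s, (1 - ψ s) ∂ν)) := by
    refine tendsto_integral_of_dominated_convergence (fun _ => 2) hφmeas
      (integrable_const 2) ?_ ?_
    · intro n
      refine Filter.Eventually.of_forall (fun s => ?_)
      have hb := abs_le.1 (hφbdd n s)
      have h2 : |1 - φ n s| ≤ 2 := by
        rw [abs_le]; constructor <;> linarith [hb.1, hb.2]
      simpa [Real.norm_eq_abs] using h2
    · exact Filter.Eventually.of_forall (fun s => ((tendsto_const_nhds).sub (hφlim s)))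
  have hψsmall : ∫ s, (1 - ψ s) ∂ν ≤ ε' * (2*r) := by
    have hmono : ∫ s, (1 - ψ s) ∂ν ≤ ∫ _s, ε' ∂ν := by
      rw [hνdef]
      refine setIntegral_mono_on ?_ ?_ measurableSet_Ioc ?_
      · refine Continuous.integrableOn_Ioc ?_
        exact continuous_const.sub (by fun_prop)
      · exact integrableOn_const (by rw [Real.volume_Ioc]; exact ENNReal.ofReal_ne_top)
      · intro s hs
        have habs : |s| ≤ r := by
          rw [abs_le]; exact ⟨by linarith [hs.1], hs.2⟩
        have := hψnear s habs
        have := (abs_le.1 this).2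
        linarith [(abs_le.1 (hψnear s habs)).1]
    calc ∫ s, (1 - ψ s) ∂ν ≤ ∫ _s, ε' ∂ν := hmono
      _ = (ν Set.univ).toReal * ε' := by rw [integral_const, smul_eq_mul, measureReal_def]
      _ = ε' * (2*r) := by rw [hνuniv]; ring
  have heps : ∫ s, (1 - ψ s) ∂ν < 2*r*ε' + r*ε' := by
    have : ε' * (2*r) < 2*r*ε' + r*ε' := by nlinarith
    linarith
  have hev := hconv.eventually_lt_const heps
  filter_upwards [hev] with n hn
  have h1 := key n
  have h2 : r * (P {ω | 2/r ≤ |Y n ω|}).toReal < 3*r*ε' := by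
    calc r * (P {ω | 2/r ≤ |Y n ω|}).toReal ≤ ∫ s, (1 - φ n s) ∂ν := h1
      _ < 2*r*ε' + r*ε' := hn
      _ = 3*r*ε' := by ring
  have h3 : (P {ω | 2/r ≤ |Y n ω|}).toReal ≤ δ := by
    have := (mul_lt_mul_iff_right₀ hr).1 (by linarith [h2] : r * (P {ω | 2/r ≤ |Y n ω|}).toReal
      < r * (3*ε'))
    have h4 : 3*ε' = δ := by rw [hε'def]; ring
    linarith
  exact (ENNReal.le_ofReal_iff_toReal_le (measure_ne_top P _) (le_of_lt hδ)).2 h3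


/-- Delta-method remainder: if `r n → ∞`, each coordinate of `r n • (ηt n - η*)` is tight,
and `A` is differentiable at `η*`, then
`r n * (A (ηt n) - A η*) - fderiv A η* (r n • (ηt n - η*)) → 0` in probability. -/
lemma delta_remainder [IsProbabilityMeasure P] {m : ℕ} (A : (Fin m → ℝ) → ℝ) (ηs : Fin m → ℝ)
    (hA : DifferentiableAt ℝ A ηs)
    (r : ℕ → ℝ) (hr : Tendsto r atTop atTop)
    (ηt : ℕ → Ω → Fin m → ℝ)
    (htight : ∀ i, TightSeq P (fun n ω => r n * (ηt n ω i - ηs i))) :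
    TendsToZeroInProb P (fun n ω =>
      r n * (A (ηt n ω) - A ηs) - r n * (fderiv ℝ A ηs (fun i => ηt n ω i - ηs i))) := by
  intro ε hε δ hδ
  rcases Nat.eq_zero_or_pos m with hm | hm
  · -- degenerate case : Fin m is empty, so ηt n ω = ηs
    subst hm
    refine Filter.Eventually.of_forall (fun n => ?_)
    have hempty : ∀ n ω, ηt n ω = ηs := by
      intro n ω; funext i; exact absurd i.2 (by omega)
    have : {ω | ε ≤ |r n * (A (ηt n ω) - A ηs)
        - r n * (fderiv ℝ A ηs (fun i => ηt n ω i - ηs i))|} = ∅ := by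
      ext ω
      simp only [Set.mem_setOf_eq, Set.mem_empty_iff_false, iff_false, not_le]
      rw [hempty n ω]
      have hz : (fun i => ηs i - ηs i) = (0 : Fin 0 → ℝ) := by funext i; simp
      rw [hz, ContinuousLinearMap.map_zero]
      simpa using hε
    rw [this]
    simp [hδ.le]
  -- main case m > 0
  have hδm : 0 < δ / m := by positivity
  -- get the tightness bounds
  choose M hM hMev using fun i => htight i (δ/m) hδm
  set Mx : ℝ := (Finset.univ.sup' (Finset.univ_nonempty_iff.2 ⟨⟨0, hm⟩⟩) M) with hMxdef
  have hMxpos : 0 < Mx :=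
    lt_of_lt_of_le (hM ⟨0, hm⟩) (Finset.le_sup' M (Finset.mem_univ ⟨0, hm⟩))
  have hMx : ∀ i, M i ≤ Mx := fun i => Finset.le_sup' M (Finset.mem_univ i)
  -- little-o property
  have hlo := hasFDerivAt_iff_isLittleO_nhds_zero.1 hA.hasFDerivAt
  have hloc := hlo.def (show (0:ℝ) < ε / (2*Mx) by positivity)
  rw [Metric.eventually_nhds_iff] at hloc
  obtain ⟨δ₀, hδ₀, hball⟩ := hloc
  -- eventual largeness of r
  have hrev : ∀ᶠ n in atTop, Mx / δ₀ < r n := hr.eventually_gt_atTop _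
  have hrpos : ∀ᶠ n in atTop, 0 < r n := hr.eventually_gt_atTop 0
  have hMev' : ∀ᶠ n in atTop, ∀ i, P {ω | M i ≤ |r n * (ηt n ω i - ηs i)|}
      ≤ ENNReal.ofReal (δ/m) := by
    rw [eventually_all]
    exact fun i => hMev i
  filter_upwards [hrev, hrpos, hMev'] with n hrn hrn0 hPn
  -- on the good event the remainder is < ε
  have hsub : {ω | ε ≤ |r n * (A (ηt n ω) - A ηs)
      - r n * (fderiv ℝ A ηs (fun i => ηt n ω i - ηs i))|}
      ⊆ ⋃ i, {ω | M i ≤ |r n * (ηt n ω i - ηs i)|} := by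
    intro ω hω
    by_contra hcon
    simp only [Set.mem_iUnion, Set.mem_setOf_eq, not_exists, not_le] at hcon
    -- all coordinates small
    set h : Fin m → ℝ := fun i => ηt n ω i - ηs i with hhdef
    have hnorm : ‖h‖ < Mx / r n := by
      rw [pi_norm_lt_iff (by positivity)]
      intro i
      have := hcon i
      rw [abs_mul, abs_of_pos hrn0] at this
      rw [Real.norm_eq_abs]
      have h2 : r n * |ηt n ω i - ηs i| < Mx := lt_of_lt_of_le this (hMx i)
      calc |h i| = |ηt n ω i - ηs i| := rfl
        _ < Mx / r n := by
            rw [lt_div_iff₀ hrn0, mul_comm]; exact h2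
    have hlt : ‖h‖ < δ₀ := by
      refine lt_trans hnorm ?_
      rw [div_lt_iff₀ hrn0]
      calc Mx = (Mx/δ₀) * δ₀ := by field_simp
        _ < r n * δ₀ := mul_lt_mul_of_pos_right hrn hδ₀
        _ = δ₀ * r n := mul_comm _ _
    have hdist : dist h 0 < δ₀ := by rwa [dist_zero_right]
    have := hball hdist
    rw [Real.norm_eq_abs] at this
    -- ‖A (ηs + h) - A ηs - fderiv h‖ ≤ ε/(2Mx) ‖h‖
    have hAh : A (ηs + h) = A (ηt n ω) := by
      congr 1; funext i; simp [hhdef]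
    rw [hAh] at this
    have hfin : |A (ηt n ω) - A ηs - fderiv ℝ A ηs h| ≤ ε/(2*Mx) * (Mx / r n) := by
      refine le_trans this ?_
      refine mul_le_mul_of_nonneg_left ?_ (by positivity)
      exact le_of_lt hnorm
    have heq : r n * (A (ηt n ω) - A ηs) - r n * (fderiv ℝ A ηs h)
        = r n * (A (ηt n ω) - A ηs - fderiv ℝ A ηs h) := by ring
    have habs : |r n * (A (ηt n ω) - A ηs)
        - r n * (fderiv ℝ A ηs h)| ≤ r n * (ε/(2*Mx) * (Mx / r n)) := by
      rw [heq, abs_mul, abs_of_pos hrn0]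
      exact mul_le_mul_of_nonneg_left hfin (le_of_lt hrn0)
    have hval : r n * (ε/(2*Mx) * (Mx / r n)) = ε/2 := by
      field_simp
    rw [hval] at habs
    rw [Set.mem_setOf_eq] at hω
    have : ε ≤ ε/2 := le_trans hω habs
    linarith
  calc P {ω | ε ≤ |r n * (A (ηt n ω) - A ηs)
        - r n * (fderiv ℝ A ηs (fun i => ηt n ω i - ηs i))|}
      ≤ P (⋃ i, {ω | M i ≤ |r n * (ηt n ω i - ηs i)|}) := measure_mono hsub
    _ ≤ ∑ i : Fin m, P {ω | M i ≤ |r n * (ηt n ω i - ηs i)|} := measure_iUnion_fintype_le _ _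
    _ ≤ ∑ i : Fin m, ENNReal.ofReal (δ/m) := Finset.sum_le_sum (fun i _ => hPn i)
    _ = (m : ENNReal) * ENNReal.ofReal (δ/m) := by
        rw [Finset.sum_const, Finset.card_univ, Fintype.card_fin, nsmul_eq_mul]
    _ = ENNReal.ofReal δ := by
        have hm0 : (m:ℝ) ≠ 0 := Nat.cast_ne_zero.2 (by omega)
        rw [← ENNReal.ofReal_natCast m, ← ENNReal.ofReal_mul (by positivity)]
        congr 1
        field_simp


end DRMProof

lemma measurable_expFamA (m : ℕ) (B : ℝ → ℝ) (qm : ℝ → Fin m → ℝ)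
    (hB : Measurable B) (hqm : Measurable qm) : Measurable (expFamA m B qm) := by
  have hjoint : StronglyMeasurable (fun p : (Fin m → ℝ) × ℝ =>
      B p.2 * Real.exp (∑ i, p.1 i * qm p.2 i)) := by
    refine Measurable.stronglyMeasurable ?_
    refine ((hB.comp measurable_snd).mul (Real.measurable_exp.comp ?_))
    refine Finset.measurable_sum _ (fun i _ => ?_)
    exact ((measurable_pi_apply i).comp measurable_fst).mul
      ((measurable_pi_apply i).comp (hqm.comp measurable_snd))
  have hint : StronglyMeasurable (fun η : Fin m → ℝ =>
      ∫ x, B x * Real.exp (∑ i, η i * qm x i)) :=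
    MeasureTheory.StronglyMeasurable.integral_prod_right
      (f := fun (η : Fin m → ℝ) (x : ℝ) => B x * Real.exp (∑ i, η i * qm x i)) hjoint
  exact (Real.measurable_log.comp hint.measurable).neg

-- quadratic form identity
lemma quad_identity (m : ℕ) (u : Fin (m+1) → ℝ) (Mx : Matrix (Fin m) (Fin m) ℝ)
    (J : Matrix (Fin (m + 1)) (Fin m) ℝ) (t : Fin m → ℝ)
    (ht : ∀ b, t b = ∑ i, u i * J i b) :
    ∑ i, ∑ j, u i * ((J * Mx * J.transpose) i j) * u j
      = ∑ i, ∑ j, t i * (Mx i j) * t j := by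
  have htv : t = Matrix.vecMul u J := by
    funext b; rw [ht b]; simp [Matrix.vecMul, dotProduct]
  have lhs_eq : ∑ i, ∑ j, u i * ((J * Mx * J.transpose) i j) * u j
      = dotProduct u ((J * Mx * J.transpose).mulVec u) := by
    simp [dotProduct, Matrix.mulVec, Finset.mul_sum, mul_assoc]
  have rhs_eq : ∑ i, ∑ j, t i * (Mx i j) * t j = dotProduct t (Mx.mulVec t) := by
    simp [dotProduct, Matrix.mulVec, Finset.mul_sum, mul_assoc]
  rw [lhs_eq, rhs_eq, htv]
  have hmv : (J * Mx * J.transpose).mulVec u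
      = J.mulVec (Mx.mulVec (Matrix.vecMul u J)) := by
    rw [← Matrix.mulVec_mulVec, ← Matrix.mulVec_mulVec, Matrix.mulVec_transpose]
  rw [hmv, Matrix.dotProduct_mulVec]

lemma char_rescale {Ω : Type*} [MeasurableSpace Ω] {P : Measure Ω} {m : ℕ}
    (Y : ℕ → Ω → Fin m → ℝ) (r : ℕ → ℝ) (Q : Matrix (Fin m) (Fin m) ℝ)
    (h : ∀ w : Fin m → ℝ, Tendsto (fun n => ∫ ω, Complex.exp (Complex.I *
        ((r n * ∑ i, w i * Y n ω i : ℝ) : ℂ)) ∂P) atTop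
        (𝓝 (Complex.exp ((-(∑ i, ∑ j, w i * Q i j * w j) / 2 : ℝ) : ℂ))))
    (v : Fin m → ℝ) (s : ℝ) :
    Tendsto (fun n => ∫ ω, Complex.exp (Complex.I *
        ((s * (r n * ∑ i, v i * Y n ω i) : ℝ) : ℂ)) ∂P) atTop
        (𝓝 (Complex.exp ((-(s^2 * (∑ i, ∑ j, v i * Q i j * v j)) / 2 : ℝ) : ℂ))) := by
  have h2 := h (fun i => s * v i)
  have e1 : ∀ n (ω : Ω), r n * ∑ i, (s * v i) * Y n ω i
      = s * (r n * ∑ i, v i * Y n ω i) := by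
    intro n ω
    have : ∑ i, (s * v i) * Y n ω i = s * ∑ i, v i * Y n ω i := by
      rw [Finset.mul_sum]; exact Finset.sum_congr rfl fun i _ => by ring
    rw [this]; ring
  have e2 : -(∑ i, ∑ j, (s * v i) * Q i j * (s * v j)) / 2
      = -(s^2 * (∑ i, ∑ j, v i * Q i j * v j)) / 2 := by
    congr 2
    rw [Finset.mul_sum]
    refine Finset.sum_congr rfl fun i _ => ?_
    rw [Finset.mul_sum]
    refine Finset.sum_congr rfl fun j _ => ?_
    ring
  have hfun : (fun n => ∫ ω, Complex.exp (Complex.I *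
      ((r n * ∑ i, (s * v i) * Y n ω i : ℝ) : ℂ)) ∂P)
      = (fun n => ∫ ω, Complex.exp (Complex.I *
      ((s * (r n * ∑ i, v i * Y n ω i) : ℝ) : ℂ)) ∂P) := by
    funext n; congr 1; funext ω; rw [e1 n ω]
  rw [hfun, e2] at h2
  exact h2

lemma sqrt_tendsto_atTop {f : ℕ → ℝ} (hf : Tendsto f atTop atTop) :
    Tendsto (fun n => Real.sqrt (f n)) atTop atTop := by
  refine tendsto_atTop_atTop.2 fun b => ?_
  obtain ⟨N, hN⟩ := tendsto_atTop_atTop.1 hf (max b 0 ^ 2)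
  refine ⟨N, fun n hn => ?_⟩
  have h2 : Real.sqrt (max b 0 ^ 2) ≤ Real.sqrt (f n) := Real.sqrt_le_sqrt (hN n hn)
  rw [Real.sqrt_sq (le_max_right b 0)] at h2
  exact le_trans (le_max_left b 0) h2

lemma cons_sum {m : ℕ} (u : Fin (m+1) → ℝ) (a : ℝ) (g : Fin m → ℝ) :
    ∑ i, u i * (Fin.cons a g : Fin (m+1) → ℝ) i = u 0 * a + ∑ i, u i.succ * g i := by
  rw [Fin.sum_univ_succ]
  simp [Fin.cons_zero, Fin.cons_succ]

lemma sum_expand {m : ℕ} (u0 : ℝ) (us E dd : Fin m → ℝ) :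
    ∑ i, (u0 * -(E i) + us i) * dd i
      = u0 * -(∑ i, E i * dd i) + ∑ i, us i * dd i := by
  have h1 : ∀ i : Fin m, (u0 * -(E i) + us i) * dd i
      = -(u0 * (E i * dd i)) + us i * dd i := fun i => by ring
  rw [Finset.sum_congr rfl (fun i _ => h1 i), Finset.sum_add_distrib]
  congr 1
  rw [Finset.sum_neg_distrib, ← Finset.mul_sum]
  ring

lemma sum_sub_distrib' {m : ℕ} (us a b : Fin m → ℝ) :
    ∑ i, us i * (a i - b i) = (∑ i, us i * a i) - ∑ i, us i * b i := by
  rw [← Finset.sum_sub_distrib]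
  exact Finset.sum_congr rfl fun i _ => by ring


open DRMProof in
/-- In the two-sample exponential family model, if the MLEs satisfy
`√n_k (η̃_k - η_k*) →d N(0, Var_k⁻¹[q₋])` with `Var_k[q₋]` positive definite, `A` is
differentiable at `η_k*` with `∇A(η_k*) = -E_k[q₋(X)]`, and `n₁/n₀ → 0`, then the MLE
`θ̃ = (A(η̃₁) - A(η̃₀), (η̃₁ - η̃₀)ᵀ)ᵀ` of the DRM parameter satisfies
`√n₁ (θ̃ - θ*) →d N(0, J Var₁⁻¹[q₋] Jᵀ)` (convergence in distribution stated via pointwise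
convergence of characteristic functions). -/
theorem expfam_mle_drm_parameter_clt
    (m : ℕ) (B : ℝ → ℝ) (hB : ∀ x, 0 ≤ B x) (qm : ℝ → Fin m → ℝ) (hqm : Measurable qm)
    (hBmeas : Measurable B)
    -- the true natural parameters and the two population distributions
    (ηstar : Fin 2 → Fin m → ℝ)
    (G : Fin 2 → Measure ℝ) (hG : ∀ k, G k = expFamMeasure m B qm (ηstar k))
    (hGprob : ∀ k, IsProbabilityMeasure (G k))
    {Ω : Type*} [MeasurableSpace Ω] (P : Measure Ω) [IsProbabilityMeasure P]
    -- the sample sizes, with n₁/n₀ → 0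
    (n₀ n₁ : ℕ → ℕ)
    (hn₀ : Tendsto (fun n => (n₀ n : ℝ)) atTop atTop)
    (hn₁ : Tendsto (fun n => (n₁ n : ℝ)) atTop atTop)
    (hsmall : Tendsto (fun n => (n₁ n : ℝ) / (n₀ n : ℝ)) atTop (𝓝 0))
    -- the maximum likelihood estimators of η₀, η₁ from the two independent samples
    (ηtil : Fin 2 → ℕ → Ω → Fin m → ℝ) (hηtilMeas : ∀ k n, Measurable (ηtil k n))
    (hηindep : ∀ n, IndepFun (ηtil 0 n) (ηtil 1 n) P)
    -- Var_k[q₋(X)], assumed positive definite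
    (V : Fin 2 → Matrix (Fin m) (Fin m) ℝ)
    (hV : ∀ k, V k = Matrix.of fun i j =>
      (∫ x, qm x i * qm x j ∂(G k)) - (∫ x, qm x i ∂(G k)) * (∫ x, qm x j ∂(G k)))
    (hVpos : ∀ k, (V k).PosDef)
    -- asymptotic normality of the MLEs: √n_k (η̃_k - η_k*) →d N(0, Var_k⁻¹[q₋])
    (hCLT : ∀ k : Fin 2, ∀ t : Fin m → ℝ,
      Tendsto
        (fun n => ∫ ω, Complex.exp (Complex.I *
            ((Real.sqrt (![n₀, n₁] k n) *
              ∑ i, t i * (ηtil k n ω i - ηstar k i) : ℝ) : ℂ)) ∂P)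
        atTop
        (𝓝 (Complex.exp ((-(∑ i, ∑ j, t i * ((V k)⁻¹ i j) * t j) / 2 : ℝ) : ℂ))))
    -- A is differentiable at η_k* with gradient -E_k[q₋(X)]
    (hA : ∀ k : Fin 2, DifferentiableAt ℝ (expFamA m B qm) (ηstar k) ∧
      ∀ v : Fin m → ℝ, fderiv ℝ (expFamA m B qm) (ηstar k) v =
        -∑ i, (∫ x, qm x i ∂(G k)) * v i)
    -- the matrix J: first row -E₁[q₋]ᵀ, remaining rows the identity
    (J : Matrix (Fin (m + 1)) (Fin m) ℝ)
    (hJ : J = Matrix.of fun i j =>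
      Fin.cases (-(∫ x, qm x j ∂(G 1))) (fun i' => if i' = j then (1 : ℝ) else 0) i) :
    ∀ u : Fin (m + 1) → ℝ,
      Tendsto
        (fun n => ∫ ω, Complex.exp (Complex.I *
            ((Real.sqrt (n₁ n) * ∑ i, u i *
              (Fin.cons
                (expFamA m B qm (ηtil 1 n ω) - expFamA m B qm (ηtil 0 n ω) -
                  (expFamA m B qm (ηstar 1) - expFamA m B qm (ηstar 0)))
                (fun i' => (ηtil 1 n ω i' - ηtil 0 n ω i') - (ηstar 1 i' - ηstar 0 i'))
                  : Fin (m + 1) → ℝ) i : ℝ) : ℂ)) ∂P)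
        atTop
        (𝓝 (Complex.exp
          ((-(∑ i, ∑ j, u i * ((J * (V 1)⁻¹ * J.transpose) i j) * u j) / 2 : ℝ) : ℂ))) := by
  intro u
  have hAmeas : Measurable (expFamA m B qm) := measurable_expFamA m B qm hBmeas hqm
  have hs0top : Tendsto (fun n => Real.sqrt (n₀ n)) atTop atTop := sqrt_tendsto_atTop hn₀
  have hs1top : Tendsto (fun n => Real.sqrt (n₁ n)) atTop atTop := sqrt_tendsto_atTop hn₁
  have hc0 : Tendsto (fun n => Real.sqrt (n₁ n) / Real.sqrt (n₀ n)) atTop (𝓝 0) := by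
    have h1 : (fun n => Real.sqrt (n₁ n) / Real.sqrt (n₀ n))
        = fun n => Real.sqrt ((n₁ n : ℝ) / (n₀ n : ℝ)) := by
      funext n
      rw [Real.sqrt_div (by positivity : (0:ℝ) ≤ ((n₁ n : ℕ) : ℝ)) _]
    rw [h1]
    have h2 := (Real.continuous_sqrt.tendsto 0).comp hsmall
    simpa [Function.comp_def, Real.sqrt_zero] using h2
  -- restated CLTs
  have hCLT0 : ∀ w : Fin m → ℝ, Tendsto (fun n => ∫ ω, Complex.exp (Complex.I *
      ((Real.sqrt (n₀ n) * ∑ i, w i * (ηtil 0 n ω i - ηstar 0 i) : ℝ) : ℂ)) ∂P) atTop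
      (𝓝 (Complex.exp ((-(∑ i, ∑ j, w i * ((V 0)⁻¹ i j) * w j) / 2 : ℝ) : ℂ))) := by
    intro w
    have h := hCLT 0 w
    simpa using h
  have hCLT1 : ∀ w : Fin m → ℝ, Tendsto (fun n => ∫ ω, Complex.exp (Complex.I *
      ((Real.sqrt (n₁ n) * ∑ i, w i * (ηtil 1 n ω i - ηstar 1 i) : ℝ) : ℂ)) ∂P) atTop
      (𝓝 (Complex.exp ((-(∑ i, ∑ j, w i * ((V 1)⁻¹ i j) * w j) / 2 : ℝ) : ℂ))) := by
    intro w
    have h := hCLT 1 w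
    simpa using h
  -- measurability of linear statistics
  have hmeas0 : ∀ (w : Fin m → ℝ) (n : ℕ), Measurable (fun ω =>
      Real.sqrt (n₀ n) * ∑ i, w i * (ηtil 0 n ω i - ηstar 0 i)) := by
    intro w n
    refine Measurable.const_mul ?_ _
    refine Finset.measurable_sum _ fun i _ => ?_
    exact (((measurable_pi_apply i).comp (hηtilMeas 0 n)).sub measurable_const).const_mul _
  have hmeas1 : ∀ (w : Fin m → ℝ) (n : ℕ), Measurable (fun ω =>
      Real.sqrt (n₁ n) * ∑ i, w i * (ηtil 1 n ω i - ηstar 1 i)) := by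
    intro w n
    refine Measurable.const_mul ?_ _
    refine Finset.measurable_sum _ fun i _ => ?_
    exact (((measurable_pi_apply i).comp (hηtilMeas 1 n)).sub measurable_const).const_mul _
  -- tightness of linear statistics
  have htight0 : ∀ w : Fin m → ℝ, TightSeq P (fun n ω =>
      Real.sqrt (n₀ n) * ∑ i, w i * (ηtil 0 n ω i - ηstar 0 i)) := fun w =>
    tight_of_char (fun n => hmeas0 w n) (∑ i, ∑ j, w i * ((V 0)⁻¹ i j) * w j)
      (fun s => char_rescale _ _ _ hCLT0 w s)
  have htight1 : ∀ w : Fin m → ℝ, TightSeq P (fun n ω =>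
      Real.sqrt (n₁ n) * ∑ i, w i * (ηtil 1 n ω i - ηstar 1 i)) := fun w =>
    tight_of_char (fun n => hmeas1 w n) (∑ i, ∑ j, w i * ((V 1)⁻¹ i j) * w j)
      (fun s => char_rescale _ _ _ hCLT1 w s)
  -- per-coordinate tightness
  have hcoord0 : ∀ i, TightSeq P (fun n ω =>
      Real.sqrt (n₀ n) * (ηtil 0 n ω i - ηstar 0 i)) := by
    intro i
    have h1 := htight0 (fun j => if j = i then 1 else 0)
    have h2 : (fun n (ω : Ω) => Real.sqrt (n₀ n) *
        ∑ j, (if j = i then (1:ℝ) else 0) * (ηtil 0 n ω j - ηstar 0 j))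
        = fun n ω => Real.sqrt (n₀ n) * (ηtil 0 n ω i - ηstar 0 i) := by
      funext n ω
      congr 1
      rw [Finset.sum_eq_single i]
      · simp
      · intro b _ hb; simp [hb]
      · intro hi; exact absurd (Finset.mem_univ i) hi
    rwa [h2] at h1
  have hcoord1 : ∀ i, TightSeq P (fun n ω =>
      Real.sqrt (n₁ n) * (ηtil 1 n ω i - ηstar 1 i)) := by
    intro i
    have h1 := htight1 (fun j => if j = i then 1 else 0)
    have h2 : (fun n (ω : Ω) => Real.sqrt (n₁ n) *
        ∑ j, (if j = i then (1:ℝ) else 0) * (ηtil 1 n ω j - ηstar 1 j))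
        = fun n ω => Real.sqrt (n₁ n) * (ηtil 1 n ω i - ηstar 1 i) := by
      funext n ω
      congr 1
      rw [Finset.sum_eq_single i]
      · simp
      · intro b _ hb; simp [hb]
      · intro hi; exact absurd (Finset.mem_univ i) hi
    rwa [h2] at h1
  -- delta-method remainders
  have hR1 : TendsToZeroInProb P (fun n ω =>
      Real.sqrt (n₁ n) * (expFamA m B qm (ηtil 1 n ω) - expFamA m B qm (ηstar 1))
      - Real.sqrt (n₁ n) * (fderiv ℝ (expFamA m B qm) (ηstar 1)
          (fun i => ηtil 1 n ω i - ηstar 1 i))) :=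
    delta_remainder _ _ (hA 1).1 _ hs1top _ hcoord1
  have hR0 : TendsToZeroInProb P (fun n ω =>
      Real.sqrt (n₀ n) * (expFamA m B qm (ηtil 0 n ω) - expFamA m B qm (ηstar 0))
      - Real.sqrt (n₀ n) * (fderiv ℝ (expFamA m B qm) (ηstar 0)
          (fun i => ηtil 0 n ω i - ηstar 0 i))) :=
    delta_remainder _ _ (hA 0).1 _ hs0top _ hcoord0
  -- combined remainder Z'
  have hu0bdd : ∀ᶠ n in atTop, |(fun _ : ℕ => u 0) n| ≤ |u 0| + 1 :=
    Filter.Eventually.of_forall (fun n => by simp)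
  have hR1u : TendsToZeroInProb P (fun n ω => u 0 *
      (Real.sqrt (n₁ n) * (expFamA m B qm (ηtil 1 n ω) - expFamA m B qm (ηstar 1))
      - Real.sqrt (n₁ n) * (fderiv ℝ (expFamA m B qm) (ηstar 1)
          (fun i => ηtil 1 n ω i - ηstar 1 i)))) :=
    TendsToZeroInProb.mul_bounded _ (|u 0| + 1) (by positivity) hu0bdd hR1
  have hR0u : TendsToZeroInProb P (fun n ω => u 0 *
      (Real.sqrt (n₀ n) * (expFamA m B qm (ηtil 0 n ω) - expFamA m B qm (ηstar 0))
      - Real.sqrt (n₀ n) * (fderiv ℝ (expFamA m B qm) (ηstar 0)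
          (fun i => ηtil 0 n ω i - ηstar 0 i)))) :=
    TendsToZeroInProb.mul_bounded _ (|u 0| + 1) (by positivity) hu0bdd hR0
  have hcle1 : ∀ᶠ n in atTop, |Real.sqrt (n₁ n) / Real.sqrt (n₀ n)| ≤ 1 := by
    have := Metric.tendsto_nhds.1 hc0 1 one_pos
    simp only [Real.dist_eq, sub_zero] at this
    filter_upwards [this] with n hn
    exact hn.le
  have hcR0 : TendsToZeroInProb P (fun n ω => (Real.sqrt (n₁ n) / Real.sqrt (n₀ n)) *
      (u 0 * (Real.sqrt (n₀ n) * (expFamA m B qm (ηtil 0 n ω) - expFamA m B qm (ηstar 0))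
      - Real.sqrt (n₀ n) * (fderiv ℝ (expFamA m B qm) (ηstar 0)
          (fun i => ηtil 0 n ω i - ηstar 0 i))))) :=
    TendsToZeroInProb.mul_bounded _ 1 one_pos hcle1 hR0u
  have hcW0 : TendsToZeroInProb P (fun n ω => (Real.sqrt (n₁ n) / Real.sqrt (n₀ n)) *
      (Real.sqrt (n₀ n) * ∑ i, (u 0 * -(∫ x, qm x i ∂(G 0)) + u i.succ) *
        (ηtil 0 n ω i - ηstar 0 i))) :=
    tendsToZeroInProb_of_tendsto_zero_mul_tight _ hc0
      (htight0 (fun i => u 0 * -(∫ x, qm x i ∂(G 0)) + u i.succ))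
  have hZ'0 : TendsToZeroInProb P (fun n ω =>
      (u 0 * (Real.sqrt (n₁ n) * (expFamA m B qm (ηtil 1 n ω) - expFamA m B qm (ηstar 1))
        - Real.sqrt (n₁ n) * (fderiv ℝ (expFamA m B qm) (ηstar 1)
            (fun i => ηtil 1 n ω i - ηstar 1 i))))
      + (-((Real.sqrt (n₁ n) / Real.sqrt (n₀ n)) *
          (u 0 * (Real.sqrt (n₀ n) * (expFamA m B qm (ηtil 0 n ω) - expFamA m B qm (ηstar 0))
          - Real.sqrt (n₀ n) * (fderiv ℝ (expFamA m B qm) (ηstar 0)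
              (fun i => ηtil 0 n ω i - ηstar 0 i)))))
        + -((Real.sqrt (n₁ n) / Real.sqrt (n₀ n)) *
            (Real.sqrt (n₀ n) * ∑ i, (u 0 * -(∫ x, qm x i ∂(G 0)) + u i.succ) *
              (ηtil 0 n ω i - ηstar 0 i))))) :=
    TendsToZeroInProb.add hR1u (TendsToZeroInProb.add hcR0.neg hcW0.neg)
  -- Z equals Z' eventually
  have hZeq : ∀ᶠ n in atTop, (fun ω : Ω => (Real.sqrt (n₁ n) * (u 0 * (expFamA m B qm (ηtil 1 n ω) - expFamA m B qm (ηtil 0 n ω) - (expFamA m B qm (ηstar 1) - expFamA m B qm (ηstar 0))) + ∑ i, u i.succ * ((ηtil 1 n ω i - ηtil 0 n ω i) - (ηstar 1 i - ηstar 0 i)))) - (Real.sqrt (n₁ n) * ∑ i, (u 0 * -(∫ x, qm x i ∂(G 1)) + u i.succ) * (ηtil 1 n ω i - ηstar 1 i)))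
      = (fun ω : Ω =>
      (u 0 * (Real.sqrt (n₁ n) * (expFamA m B qm (ηtil 1 n ω) - expFamA m B qm (ηstar 1))
        - Real.sqrt (n₁ n) * (fderiv ℝ (expFamA m B qm) (ηstar 1)
            (fun i => ηtil 1 n ω i - ηstar 1 i))))
      + (-((Real.sqrt (n₁ n) / Real.sqrt (n₀ n)) *
          (u 0 * (Real.sqrt (n₀ n) * (expFamA m B qm (ηtil 0 n ω) - expFamA m B qm (ηstar 0))
          - Real.sqrt (n₀ n) * (fderiv ℝ (expFamA m B qm) (ηstar 0)
              (fun i => ηtil 0 n ω i - ηstar 0 i)))))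
        + -((Real.sqrt (n₁ n) / Real.sqrt (n₀ n)) *
            (Real.sqrt (n₀ n) * ∑ i, (u 0 * -(∫ x, qm x i ∂(G 0)) + u i.succ) *
              (ηtil 0 n ω i - ηstar 0 i))))) := by
    have hev : ∀ᶠ n in atTop, (1:ℝ) ≤ (n₀ n : ℝ) := hn₀.eventually_ge_atTop 1
    filter_upwards [hev] with n hn1
    funext ω
    have hs0pos : (0:ℝ) < Real.sqrt (n₀ n) := Real.sqrt_pos.2 (by linarith)
    have hcs0 : (Real.sqrt (n₁ n) / Real.sqrt (n₀ n)) * Real.sqrt (n₀ n)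
        = Real.sqrt (n₁ n) := div_mul_cancel₀ _ (ne_of_gt hs0pos)
    rw [(hA 1).2 (fun i => ηtil 1 n ω i - ηstar 1 i),
        (hA 0).2 (fun i => ηtil 0 n ω i - ηstar 0 i)]
    rw [sum_expand, sum_expand]
    simp only [sum_sub_distrib']
    linear_combination
      (u 0 * (expFamA m B qm (ηtil 0 n ω) - expFamA m B qm (ηstar 0))
        + ((∑ i, u i.succ * ηtil 0 n ω i) - ∑ i, u i.succ * ηstar 0 i)) * hcs0
  have hZ0 : TendsToZeroInProb P (fun n ω => (Real.sqrt (n₁ n) * (u 0 * (expFamA m B qm (ηtil 1 n ω) - expFamA m B qm (ηtil 0 n ω) - (expFamA m B qm (ηstar 1) - expFamA m B qm (ηstar 0))) + ∑ i, u i.succ * ((ηtil 1 n ω i - ηtil 0 n ω i) - (ηstar 1 i - ηstar 0 i)))) - (Real.sqrt (n₁ n) * ∑ i, (u 0 * -(∫ x, qm x i ∂(G 1)) + u i.succ) * (ηtil 1 n ω i - ηstar 1 i))) := by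
    refine TendsToZeroInProb.congr' ?_ hZ'0
    filter_upwards [hZeq] with n hn
    exact hn.symm
  -- measurability
  have hXm : ∀ n, Measurable (fun ω : Ω => Real.sqrt (n₁ n) * ∑ i, (u 0 * -(∫ x, qm x i ∂(G 1)) + u i.succ) * (ηtil 1 n ω i - ηstar 1 i)) := fun n => hmeas1 _ n
  have hZm : ∀ n, Measurable (fun ω : Ω => (Real.sqrt (n₁ n) * (u 0 * (expFamA m B qm (ηtil 1 n ω) - expFamA m B qm (ηtil 0 n ω) - (expFamA m B qm (ηstar 1) - expFamA m B qm (ηstar 0))) + ∑ i, u i.succ * ((ηtil 1 n ω i - ηtil 0 n ω i) - (ηstar 1 i - ηstar 0 i)))) - (Real.sqrt (n₁ n) * ∑ i, (u 0 * -(∫ x, qm x i ∂(G 1)) + u i.succ) * (ηtil 1 n ω i - ηstar 1 i))) := by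
    intro n
    refine Measurable.sub ?_ (hmeas1 _ n)
    refine Measurable.const_mul ?_ _
    refine Measurable.add ?_ ?_
    · refine Measurable.const_mul ?_ _
      exact ((hAmeas.comp (hηtilMeas 1 n)).sub (hAmeas.comp (hηtilMeas 0 n))).sub
        measurable_const
    · refine Finset.measurable_sum _ fun i _ => ?_
      refine Measurable.const_mul ?_ _
      exact (((measurable_pi_apply i).comp (hηtilMeas 1 n)).sub
        ((measurable_pi_apply i).comp (hηtilMeas 0 n))).sub measurable_const
  -- the limit of the main term
  have hXlim := hCLT1 (fun i => u 0 * -(∫ x, qm x i ∂(G 1)) + u i.succ)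
  -- quadratic form identity
  have ht1 : ∀ b, (fun i => u 0 * -(∫ x, qm x i ∂(G 1)) + u i.succ) b
      = ∑ i, u i * J i b := by
    intro b
    rw [hJ, Fin.sum_univ_succ]
    simp only [Matrix.of_apply, Fin.cases_zero, Fin.cases_succ, mul_ite, mul_one, mul_zero]
    rw [Finset.sum_ite_eq' Finset.univ b (fun i => u i.succ)]
    simp [mul_comm]
  have hQeq : ∑ i, ∑ j, u i * ((J * (V 1)⁻¹ * J.transpose) i j) * u j
      = ∑ i, ∑ j, (fun i => u 0 * -(∫ x, qm x i ∂(G 1)) + u i.succ) i * ((V 1)⁻¹ i j)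
          * (fun i => u 0 * -(∫ x, qm x i ∂(G 1)) + u i.succ) j :=
    quad_identity m u ((V 1)⁻¹) J _ ht1
  rw [hQeq]
  -- apply Slutsky
  have final := slutsky_char (P := P)
    (X := fun n (ω : Ω) => Real.sqrt (n₁ n) * ∑ i, (u 0 * -(∫ x, qm x i ∂(G 1)) + u i.succ) * (ηtil 1 n ω i - ηstar 1 i))
    (Z := fun n (ω : Ω) => (Real.sqrt (n₁ n) * (u 0 * (expFamA m B qm (ηtil 1 n ω) - expFamA m B qm (ηtil 0 n ω) - (expFamA m B qm (ηstar 1) - expFamA m B qm (ηstar 0))) + ∑ i, u i.succ * ((ηtil 1 n ω i - ηtil 0 n ω i) - (ηstar 1 i - ηstar 0 i)))) - (Real.sqrt (n₁ n) * ∑ i, (u 0 * -(∫ x, qm x i ∂(G 1)) + u i.succ) * (ηtil 1 n ω i - ηstar 1 i))) hXm hZm hXlim hZ0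
  have hfunal : (fun n => ∫ ω, Complex.exp (Complex.I * (((Real.sqrt (n₁ n) * ∑ i, (u 0 * -(∫ x, qm x i ∂(G 1)) + u i.succ) * (ηtil 1 n ω i - ηstar 1 i)) + ((Real.sqrt (n₁ n) * (u 0 * (expFamA m B qm (ηtil 1 n ω) - expFamA m B qm (ηtil 0 n ω) - (expFamA m B qm (ηstar 1) - expFamA m B qm (ηstar 0))) + ∑ i, u i.succ * ((ηtil 1 n ω i - ηtil 0 n ω i) - (ηstar 1 i - ηstar 0 i)))) - (Real.sqrt (n₁ n) * ∑ i, (u 0 * -(∫ x, qm x i ∂(G 1)) + u i.succ) * (ηtil 1 n ω i - ηstar 1 i))) : ℝ) : ℂ)) ∂P)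
      = (fun n => ∫ ω, Complex.exp (Complex.I *
          ((Real.sqrt (n₁ n) * ∑ i, u i *
            (Fin.cons
              (expFamA m B qm (ηtil 1 n ω) - expFamA m B qm (ηtil 0 n ω) -
                (expFamA m B qm (ηstar 1) - expFamA m B qm (ηstar 0)))
              (fun i' => (ηtil 1 n ω i' - ηtil 0 n ω i') - (ηstar 1 i' - ηstar 0 i'))
                : Fin (m + 1) → ℝ) i : ℝ) : ℂ)) ∂P) := by
    funext n
    congr 1
    funext ω
    congr 2
    rw [cons_sum]
    push_cast
    ring
  rwa [hfunal] at final

end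
end

section
/- Under the two-sample density ratio model with Conditions (i)–(iii), for every multi-index α of order |α| = 3 the third-order partial derivatives of the profile log empirical likelihood are of order n₁ uniformly near the truth: sup_{‖θ − θ*‖ ≤ n₁^{−1/3}} |∂^α ℓ_n(θ)/∂θ^α| = O_p(n₁) as n₀, n₁ → ∞ with n₀/n₁ → ∞, i.e., n₁^{−1} times this supremum is bounded in probability. -/
open MeasureTheory ProbabilityTheory Filter
open scoped BigOperators Topology

noncomputable section

/-- `Z_n = O_p(a_n)`: `Z_n / a_n` is bounded in probability. -/
def IsBigOpProb {Ω : Type*} [MeasurableSpace Ω] (P : Measure Ω)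
    (Z : ℕ → Ω → ℝ) (a : ℕ → ℝ) : Prop :=
  ∀ ε : ℝ, 0 < ε → ∃ C : ℝ, 0 < C ∧
    ∀ᶠ n in Filter.atTop, P {ω | C * a n ≤ |Z n ω|} ≤ ENNReal.ofReal ε

/-- The third-order partial derivative `∂³ℓ_n(θ)/∂θ_a ∂θ_b ∂θ_c` of the dual/profile log
empirical likelihood `ℓ_n(θ) = -Σ_{k,j} log[n₀ + n₁ exp(θᵀ q(x_{kj}))] + Σ_j θᵀ q(x_{1j})`
of the two-sample density ratio model. -/
def drmThirdDeriv {Ω : Type*} (d : ℕ) (q : ℝ → Fin (d + 1) → ℝ)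
    (X : Fin 2 → ℕ → Ω → ℝ) (n₀ n₁ : ℕ) (θ : Fin (d + 1) → ℝ) (ω : Ω)
    (a b c : Fin (d + 1)) : ℝ :=
  -(∑ k : Fin 2, ∑ j ∈ Finset.range (![n₀, n₁] k),
      (n₀ : ℝ) * (n₁ : ℝ) * Real.exp (∑ l, θ l * q (X k j ω) l) *
        ((n₀ : ℝ) - (n₁ : ℝ) * Real.exp (∑ l, θ l * q (X k j ω) l))
        / ((n₀ : ℝ) + (n₁ : ℝ) * Real.exp (∑ l, θ l * q (X k j ω) l)) ^ 3
        * q (X k j ω) a * q (X k j ω) b * q (X k j ω) c)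

/-- cube vs exp -/
lemma cube_le_six_exp {t : ℝ} (ht : 0 ≤ t) : t ^ 3 ≤ 6 * Real.exp t := by
  have h := Real.sum_le_exp_of_nonneg ht 4
  have he : (∑ i ∈ Finset.range 4, t ^ i / (Nat.factorial i : ℝ))
      = 1 + t + t ^ 2 / 2 + t ^ 3 / 6 := by
    norm_num [Finset.sum_range_succ, Nat.factorial]
  rw [he] at h
  nlinarith [sq_nonneg t]

/-- sign-expansion integrability trick -/
lemma integrable_exp_comb {d : ℕ} {μ : Measure ℝ} (q : ℝ → Fin (d + 1) → ℝ)
    (hq : Measurable q) (θ0 : Fin (d + 1) → ℝ) (a : ℝ)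
    (h : ∀ σ : Fin (d + 1) → Bool,
      Integrable (fun x => Real.exp (∑ i, (θ0 i + (if σ i then a else -a)) * q x i)) μ) :
    Integrable (fun x => Real.exp ((∑ i, θ0 i * q x i) + a * ∑ i, |q x i|)) μ := by
  have hmeasi : ∀ i : Fin (d + 1), Measurable fun x => q x i :=
    fun i => (measurable_pi_apply i).comp hq
  refine Integrable.mono' (g := fun x => ∑ σ : Fin (d + 1) → Bool,
      Real.exp (∑ i, (θ0 i + (if σ i then a else -a)) * q x i))
    (integrable_finset_sum _ fun σ _ => h σ) ?_ ?_
  · apply Measurable.aestronglyMeasurable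
    apply Real.measurable_exp.comp
    exact (Finset.measurable_sum _ fun i _ => (hmeasi i).const_mul (θ0 i)).add
      ((Finset.measurable_sum _ fun i _ => (hmeasi i).abs).const_mul a)
  · refine Filter.Eventually.of_forall fun x => ?_
    rw [Real.norm_eq_abs, abs_of_pos (Real.exp_pos _)]
    have hx : (∑ i, θ0 i * q x i) + a * ∑ i, |q x i|
        = ∑ i, (θ0 i + (if (fun i => decide (0 ≤ q x i)) i then a else -a)) * q x i := by
      rw [Finset.mul_sum, ← Finset.sum_add_distrib]
      refine Finset.sum_congr rfl fun i _ => ?_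
      by_cases h0 : 0 ≤ q x i
      · rw [if_pos (by simpa using h0), abs_of_nonneg h0]
        ring
      · rw [if_neg (by simpa using h0), abs_of_neg (lt_of_not_ge h0)]
        ring
    rw [hx]
    exact Finset.single_le_sum (f := fun σ : Fin (d + 1) → Bool =>
      Real.exp (∑ i, (θ0 i + (if σ i then a else -a)) * q x i))
      (fun σ _ => (Real.exp_pos _).le) (Finset.mem_univ _)

/-- per-term bound -/
lemma drm_term_bound {d : ℕ} (θ θs : Fin (d + 1) → ℝ) {c : ℝ} (hc : 0 < c)
    (hθ : ∀ i, |θ i - θs i| ≤ c) (v : Fin (d + 1) → ℝ) (ia ib ie : Fin (d + 1))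
    {N₀ N₁ : ℝ} (h0 : 0 < N₀) (h1 : 0 < N₁) :
    |N₀ * N₁ * Real.exp (∑ l, θ l * v l) * (N₀ - N₁ * Real.exp (∑ l, θ l * v l)) /
        (N₀ + N₁ * Real.exp (∑ l, θ l * v l)) ^ 3 * v ia * v ib * v ie|
      ≤ min (N₁ / N₀ * (6 / c ^ 3 *
              Real.exp ((∑ l, θs l * v l) + 2 * c * ∑ l, |v l|)))
            (6 / c ^ 3 * Real.exp (c * ∑ l, |v l|)) := by
  set s := ∑ l, θ l * v l with hs_def
  set E := Real.exp s with hE_def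
  have hE : 0 < E := Real.exp_pos _
  set S := ∑ l, |v l| with hS_def
  have hS0 : 0 ≤ S := Finset.sum_nonneg fun l _ => abs_nonneg _
  have hvS : ∀ i, |v i| ≤ S := fun i =>
    Finset.single_le_sum (fun l _ => abs_nonneg (v l)) (Finset.mem_univ i)
  have hD : 0 < N₀ + N₁ * E := by positivity
  have habs : |N₀ * N₁ * E * (N₀ - N₁ * E) / (N₀ + N₁ * E) ^ 3 * v ia * v ib * v ie|
      = N₀ * N₁ * E * |N₀ - N₁ * E| / (N₀ + N₁ * E) ^ 3 * |v ia| * |v ib| * |v ie| := by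
    rw [abs_mul, abs_mul, abs_mul, abs_div, abs_mul,
      abs_of_pos (by positivity : (0:ℝ) < N₀ * N₁ * E),
      abs_of_pos (by positivity : (0:ℝ) < (N₀ + N₁ * E) ^ 3)]
  have hsub : |N₀ - N₁ * E| ≤ N₀ + N₁ * E := by
    rw [abs_le]; constructor <;> nlinarith
  have h0D : N₀ ≤ N₀ + N₁ * E := by nlinarith
  have h1D : N₁ * E ≤ N₀ + N₁ * E := by nlinarith
  have hP : N₀ * (N₁ * E) ≤ (N₀ + N₁ * E) * (N₀ + N₁ * E) :=
    mul_le_mul h0D h1D (by positivity) hD.le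
  have hfac1 : N₀ * N₁ * E * |N₀ - N₁ * E| / (N₀ + N₁ * E) ^ 3 ≤ 1 := by
    rw [div_le_one (by positivity)]
    nlinarith [mul_nonneg (mul_nonneg hD.le hD.le) (sub_nonneg.2 hsub),
      mul_nonneg (abs_nonneg (N₀ - N₁ * E)) (sub_nonneg.2 hP)]
  have hP2 : N₀ * N₀ ≤ (N₀ + N₁ * E) * (N₀ + N₁ * E) :=
    mul_le_mul h0D h0D h0.le hD.le
  have hfac0 : N₀ * N₁ * E * |N₀ - N₁ * E| / (N₀ + N₁ * E) ^ 3 ≤ N₁ * E / N₀ := by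
    rw [div_le_div_iff₀ (by positivity) h0]
    have hkey : N₀ * N₀ * |N₀ - N₁ * E| ≤ (N₀ + N₁ * E) ^ 3 := by
      nlinarith [mul_nonneg (mul_nonneg hD.le hD.le) (sub_nonneg.2 hsub),
        mul_nonneg (abs_nonneg (N₀ - N₁ * E)) (sub_nonneg.2 hP2)]
    nlinarith [mul_le_mul_of_nonneg_left hkey (by positivity : (0:ℝ) ≤ N₁ * E)]
  have hcube : |v ia| * |v ib| * |v ie| ≤ 6 / c ^ 3 * Real.exp (c * S) := by
    have h1' : |v ia| * |v ib| * |v ie| ≤ S ^ 3 := by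
      have := mul_le_mul (mul_le_mul (hvS ia) (hvS ib) (abs_nonneg _) hS0) (hvS ie)
        (abs_nonneg _) (by positivity)
      calc |v ia| * |v ib| * |v ie| ≤ S * S * S := this
        _ = S ^ 3 := by ring
    have h2' : (c * S) ^ 3 ≤ 6 * Real.exp (c * S) := cube_le_six_exp (by positivity)
    have h3' : S ^ 3 ≤ 6 / c ^ 3 * Real.exp (c * S) := by
      rw [div_mul_eq_mul_div, le_div_iff₀ (by positivity)]
      calc S ^ 3 * c ^ 3 = (c * S) ^ 3 := by ring
        _ ≤ 6 * Real.exp (c * S) := h2'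
    linarith
  have hcubenn : (0:ℝ) ≤ |v ia| * |v ib| * |v ie| := by positivity
  have hshift : E ≤ Real.exp ((∑ l, θs l * v l) + c * S) := by
    rw [hE_def]
    apply Real.exp_le_exp.mpr
    have hdiff : s - ∑ l, θs l * v l = ∑ l, (θ l - θs l) * v l := by
      rw [hs_def, ← Finset.sum_sub_distrib]
      exact Finset.sum_congr rfl fun l _ => by ring
    have hb : ∑ l, (θ l - θs l) * v l ≤ c * S := by
      rw [hS_def, Finset.mul_sum]
      exact Finset.sum_le_sum fun l _ => (le_abs_self _).trans
        (by rw [abs_mul]; exact mul_le_mul_of_nonneg_right (hθ l) (abs_nonneg _))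
    linarith
  rw [habs]
  have hfacnn : (0:ℝ) ≤ N₀ * N₁ * E * |N₀ - N₁ * E| / (N₀ + N₁ * E) ^ 3 := by positivity
  refine le_min ?_ ?_
  · calc N₀ * N₁ * E * |N₀ - N₁ * E| / (N₀ + N₁ * E) ^ 3 * |v ia| * |v ib| * |v ie|
        = (N₀ * N₁ * E * |N₀ - N₁ * E| / (N₀ + N₁ * E) ^ 3) * (|v ia| * |v ib| * |v ie|) := by
          ring
      _ ≤ (N₁ * E / N₀) * (6 / c ^ 3 * Real.exp (c * S)) :=
          mul_le_mul hfac0 hcube hcubenn (by positivity)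
      _ = N₁ / N₀ * (6 / c ^ 3 * (Real.exp (c * S) * E)) := by ring
      _ ≤ N₁ / N₀ * (6 / c ^ 3 * Real.exp ((∑ l, θs l * v l) + 2 * c * S)) := by
          have : Real.exp (c * S) * E
              ≤ Real.exp ((∑ l, θs l * v l) + 2 * c * S) := by
            calc Real.exp (c * S) * E
                ≤ Real.exp (c * S) * Real.exp ((∑ l, θs l * v l) + c * S) :=
                  mul_le_mul_of_nonneg_left hshift (Real.exp_pos _).le
              _ = Real.exp (c * S + ((∑ l, θs l * v l) + c * S)) := (Real.exp_add _ _).symm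
              _ = Real.exp ((∑ l, θs l * v l) + 2 * c * S) := by ring_nf
          have h6 : (0:ℝ) ≤ 6 / c ^ 3 := by positivity
          have hNN : (0:ℝ) ≤ N₁ / N₀ := by positivity
          exact mul_le_mul_of_nonneg_left (mul_le_mul_of_nonneg_left this h6) hNN
  · calc N₀ * N₁ * E * |N₀ - N₁ * E| / (N₀ + N₁ * E) ^ 3 * |v ia| * |v ib| * |v ie|
        = (N₀ * N₁ * E * |N₀ - N₁ * E| / (N₀ + N₁ * E) ^ 3) * (|v ia| * |v ib| * |v ie|) := by
          ring
      _ ≤ 1 * (|v ia| * |v ib| * |v ie|) := mul_le_mul_of_nonneg_right hfac1 hcubenn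
      _ = |v ia| * |v ib| * |v ie| := one_mul _
      _ ≤ 6 / c ^ 3 * Real.exp (c * S) := hcube


/-- Under the two-sample density ratio model with Conditions (i)–(iii), for
every multi-index of order three, the third-order partial derivatives of the profile log
empirical likelihood are `O_p(n₁)` uniformly over `‖θ - θ*‖ ≤ n₁^{-1/3}`. -/
theorem drm_third_derivative_order
    (d : ℕ) {Ω : Type*} [MeasurableSpace Ω] (P : Measure Ω) [IsProbabilityMeasure P]
    (G : Fin 2 → Measure ℝ) [∀ k, IsProbabilityMeasure (G k)]
    (q : ℝ → Fin (d + 1) → ℝ) (hqmeas : Measurable q)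
    (hq0 : ∀ x, q x 0 = 1)
    (θstar : Fin (d + 1) → ℝ)
    (hDRM : G 1 = (G 0).withDensity fun x => ENNReal.ofReal (Real.exp (∑ i, θstar i * q x i)))
    (X : Fin 2 → ℕ → Ω → ℝ) (hXmeas : ∀ k j, Measurable (X k j))
    (hindep : iIndepFun (fun p : Fin 2 × ℕ => X p.1 p.2) P)
    (hlaw : ∀ k j, Measure.map (X k j) P = G k)
    -- Condition (i)
    (n₀ n₁ : ℕ → ℕ)
    (hn₀ : Tendsto (fun n => (n₀ n : ℝ)) atTop atTop)
    (hn₁ : Tendsto (fun n => (n₁ n : ℝ)) atTop atTop)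
    (hratio : Tendsto (fun n => (n₀ n : ℝ) / (n₁ n : ℝ)) atTop atTop)
    -- Condition (ii)
    (hii : (Matrix.of fun i j => ∫ x, q x i * q x j ∂(G 0)).PosDef)
    -- Condition (iii)
    (hiii : ∃ ε > 0, ∀ θ : Fin (d + 1) → ℝ,
      (Real.sqrt (∑ i, (θ i - θstar i) ^ 2) < ε ∨ Real.sqrt (∑ i, (θ i) ^ 2) < ε) →
      Integrable (fun x => Real.exp (∑ i, θ i * q x i)) (G 0) ∧
      Integrable (fun x => Real.exp (∑ i, θ i * q x i)) (G 1)) :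
    ∀ a b c : Fin (d + 1),
      IsBigOpProb P
        (fun n ω =>
          ⨆ θ : {θ : Fin (d + 1) → ℝ //
              Real.sqrt (∑ i, (θ i - θstar i) ^ 2) ≤ (n₁ n : ℝ) ^ (-(1 / 3 : ℝ))},
            |drmThirdDeriv d q X (n₀ n) (n₁ n) θ.1 ω a b c|)
        (fun n => (n₁ n : ℝ)) := by
  intro ia ib ic
  obtain ⟨δ, hδ, hInt⟩ := hiii
  set c : ℝ := δ / (4 * ((d : ℝ) + 1)) with hc_def
  have hd1 : (1 : ℝ) ≤ (d : ℝ) + 1 := by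
    have : (0:ℝ) ≤ (d:ℝ) := Nat.cast_nonneg d
    linarith
  have hc : 0 < c := by
    rw [hc_def]; positivity
  -- the dominating functions
  set F0 : ℝ → ℝ := fun x =>
    6 / c ^ 3 * Real.exp ((∑ l, θstar l * q x l) + 2 * c * ∑ l, |q x l|) with hF0_def
  set F1 : ℝ → ℝ := fun x => 6 / c ^ 3 * Real.exp (c * ∑ l, |q x l|) with hF1_def
  have hqi : ∀ i : Fin (d + 1), Measurable fun x => q x i :=
    fun i => (measurable_pi_apply i).comp hqmeas
  have hF0nn : ∀ x, 0 ≤ F0 x := fun x => by rw [hF0_def]; positivity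
  have hF1nn : ∀ x, 0 ≤ F1 x := fun x => by rw [hF1_def]; positivity
  have hF0meas : Measurable F0 := by
    rw [hF0_def]
    exact (Real.measurable_exp.comp
      ((Finset.measurable_sum _ fun i _ => (hqi i).const_mul (θstar i)).add
        ((Finset.measurable_sum _ fun i _ => (hqi i).abs).const_mul (2 * c)))).const_mul _
  have hF1meas : Measurable F1 := by
    rw [hF1_def]
    exact (Real.measurable_exp.comp
      ((Finset.measurable_sum _ fun i _ => (hqi i).abs).const_mul c)).const_mul _
  -- integrability of F0 under G 0
  have hexp0int : Integrable
      (fun x => Real.exp ((∑ l, θstar l * q x l) + 2 * c * ∑ l, |q x l|)) (G 0) := by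
    apply integrable_exp_comb q hqmeas θstar (2 * c)
    intro σ
    refine (hInt (fun i => θstar i + (if σ i then 2 * c else -(2 * c))) (Or.inl ?_)).1
    have hsum : (∑ i, ((fun i => θstar i + (if σ i then 2 * c else -(2 * c))) i - θstar i) ^ 2)
        = ((d : ℝ) + 1) * (2 * c) ^ 2 := by
      have hpt : ∀ i : Fin (d + 1),
          ((fun i => θstar i + (if σ i then 2 * c else -(2 * c))) i - θstar i) ^ 2
            = (2 * c) ^ 2 := by
        intro i; by_cases hσ : σ i <;> simp [hσ] <;> ring
      rw [Finset.sum_congr rfl fun i _ => hpt i, Finset.sum_const, Finset.card_univ,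
        Fintype.card_fin, nsmul_eq_mul]
      push_cast; ring
    rw [hsum, Real.sqrt_lt' hδ]
    rw [hc_def]
    have hDpos : (0:ℝ) < (d : ℝ) + 1 := by linarith
    have e : ((d:ℝ) + 1) * (2 * (δ / (4 * ((d:ℝ) + 1)))) ^ 2 = δ ^ 2 / (4 * ((d:ℝ) + 1)) := by
      field_simp
      ring
    rw [e, div_lt_iff₀ (by positivity)]
    nlinarith [mul_pos hδ hδ]
  have hF0int : Integrable F0 (G 0) := by rw [hF0_def]; exact hexp0int.const_mul _
  -- integrability of F1 under G 1
  have hexp1int : Integrable (fun x => Real.exp (c * ∑ l, |q x l|)) (G 1) := by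
    have h1' : Integrable
        (fun x => Real.exp ((∑ l, (fun _ : Fin (d + 1) => (0:ℝ)) l * q x l)
          + c * ∑ l, |q x l|)) (G 1) := by
      apply integrable_exp_comb q hqmeas _ c
      intro σ
      refine (hInt (fun i => (0:ℝ) + (if σ i then c else -c)) (Or.inr ?_)).2
      have hsum : (∑ i, ((fun i => (0:ℝ) + (if σ i then c else -c)) i) ^ 2)
          = ((d : ℝ) + 1) * c ^ 2 := by
        have hpt : ∀ i : Fin (d + 1),
            ((fun i => (0:ℝ) + (if σ i then c else -c)) i) ^ 2 = c ^ 2 := by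
          intro i; by_cases hσ : σ i <;> simp [hσ]
        rw [Finset.sum_congr rfl fun i _ => hpt i, Finset.sum_const, Finset.card_univ,
          Fintype.card_fin, nsmul_eq_mul]
        push_cast; ring
      rw [hsum, Real.sqrt_lt' hδ]
      rw [hc_def]
      have hDpos : (0:ℝ) < (d : ℝ) + 1 := by linarith
      have e : ((d:ℝ) + 1) * (δ / (4 * ((d:ℝ) + 1))) ^ 2 = δ ^ 2 / (16 * ((d:ℝ) + 1)) := by
        field_simp
        ring
      rw [e, div_lt_iff₀ (by positivity)]
      nlinarith [mul_pos hδ hδ]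
    refine h1'.congr (Filter.Eventually.of_forall fun x => ?_)
    simp
  have hF1int : Integrable F1 (G 1) := by rw [hF1_def]; exact hexp1int.const_mul _
  set I0 : ℝ := ∫ x, F0 x ∂(G 0) with hI0_def
  set I1 : ℝ := ∫ x, F1 x ∂(G 1) with hI1_def
  have hI0nn : 0 ≤ I0 := by rw [hI0_def]; exact integral_nonneg hF0nn
  have hI1nn : 0 ≤ I1 := by rw [hI1_def]; exact integral_nonneg hF1nn
  intro ε hε
  set C : ℝ := 2 * (I0 + I1) / ε + 1 with hC_def
  have hCpos : 0 < C := by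
    have h0' : 0 ≤ 2 * (I0 + I1) / ε := div_nonneg (by linarith) hε.le
    rw [hC_def]; linarith
  refine ⟨C, hCpos, ?_⟩
  have hrt : Tendsto (fun n => ((n₁ n : ℝ)) ^ (-(1 / 3 : ℝ))) atTop (𝓝 0) :=
    (tendsto_rpow_neg_atTop (by norm_num : (0:ℝ) < 1 / 3)).comp hn₁
  filter_upwards [hn₀.eventually_ge_atTop 1, hn₁.eventually_ge_atTop 1,
    hrt.eventually (eventually_le_nhds hc)] with n hN0 hN1 hrc
  have hN0pos : (0:ℝ) < (n₀ n : ℝ) := lt_of_lt_of_le one_pos hN0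
  have hN1pos : (0:ℝ) < (n₁ n : ℝ) := lt_of_lt_of_le one_pos hN1
  set Aω : Ω → ℝ := fun ω =>
    (n₁ n : ℝ) / (n₀ n : ℝ) * ∑ j ∈ Finset.range (n₀ n), F0 (X 0 j ω) with hA_def
  set Bω : Ω → ℝ := fun ω => ∑ j ∈ Finset.range (n₁ n), F1 (X 1 j ω) with hB_def
  -- the uniform deterministic bound
  have hZb : ∀ ω,
      (⨆ θ : {θ : Fin (d + 1) → ℝ //
          Real.sqrt (∑ i, (θ i - θstar i) ^ 2) ≤ (n₁ n : ℝ) ^ (-(1 / 3 : ℝ))},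
        |drmThirdDeriv d q X (n₀ n) (n₁ n) θ.1 ω ia ib ic|) ≤ Aω ω + Bω ω := by
    intro ω
    have hne : Nonempty {θ : Fin (d + 1) → ℝ //
        Real.sqrt (∑ i, (θ i - θstar i) ^ 2) ≤ (n₁ n : ℝ) ^ (-(1 / 3 : ℝ))} := by
      refine ⟨⟨θstar, ?_⟩⟩
      have h0' : Real.sqrt (∑ i, (θstar i - θstar i) ^ 2) = 0 := by simp
      rw [h0']
      exact Real.rpow_nonneg (Nat.cast_nonneg _) _
    refine ciSup_le fun θθ => ?_
    obtain ⟨θ, hθr⟩ := θθ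
    have hθc : ∀ i, |θ i - θstar i| ≤ c := by
      intro i
      calc |θ i - θstar i| = Real.sqrt ((θ i - θstar i) ^ 2) := (Real.sqrt_sq_eq_abs _).symm
        _ ≤ Real.sqrt (∑ i, (θ i - θstar i) ^ 2) :=
          Real.sqrt_le_sqrt (Finset.single_le_sum
            (f := fun l => (θ l - θstar l) ^ 2) (fun l _ => sq_nonneg _) (Finset.mem_univ i))
        _ ≤ (n₁ n : ℝ) ^ (-(1 / 3 : ℝ)) := hθr
        _ ≤ c := hrc
    show |drmThirdDeriv d q X (n₀ n) (n₁ n) θ ω ia ib ic| ≤ Aω ω + Bω ω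
    rw [drmThirdDeriv, abs_neg, Fin.sum_univ_two]
    simp only [Matrix.cons_val_zero, Matrix.cons_val_one, Matrix.head_cons]
    refine (abs_add_le _ _).trans (add_le_add ?_ ?_)
    · refine (Finset.abs_sum_le_sum_abs _ _).trans ?_
      rw [hA_def]
      simp only [Finset.mul_sum]
      refine Finset.sum_le_sum fun j _ => ?_
      refine (drm_term_bound θ θstar hc hθc (q (X 0 j ω)) ia ib ic hN0pos hN1pos).trans ?_
      refine (min_le_left _ _).trans ?_
      rw [hF0_def]
    · refine (Finset.abs_sum_le_sum_abs _ _).trans ?_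
      rw [hB_def]
      refine Finset.sum_le_sum fun j _ => ?_
      refine (drm_term_bound θ θstar hc hθc (q (X 1 j ω)) ia ib ic hN0pos hN1pos).trans ?_
      refine (min_le_right _ _).trans ?_
      rw [hF1_def]
  -- integrability and expectations of Aω and Bω
  have hcomp0 : ∀ j, Integrable (fun ω => F0 (X 0 j ω)) P := fun j => by
    have h' := hF0int
    rw [← hlaw 0 j] at h'
    exact (integrable_map_measure hF0meas.aestronglyMeasurable
      (hXmeas 0 j).aemeasurable).mp h'
  have hcomp1 : ∀ j, Integrable (fun ω => F1 (X 1 j ω)) P := fun j => by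
    have h' := hF1int
    rw [← hlaw 1 j] at h'
    exact (integrable_map_measure hF1meas.aestronglyMeasurable
      (hXmeas 1 j).aemeasurable).mp h'
  have hval0 : ∀ j, ∫ ω, F0 (X 0 j ω) ∂P = I0 := fun j => by
    rw [hI0_def, ← hlaw 0 j,
      integral_map (hXmeas 0 j).aemeasurable hF0meas.aestronglyMeasurable]
  have hval1 : ∀ j, ∫ ω, F1 (X 1 j ω) ∂P = I1 := fun j => by
    rw [hI1_def, ← hlaw 1 j,
      integral_map (hXmeas 1 j).aemeasurable hF1meas.aestronglyMeasurable]
  have hAint : Integrable Aω P := by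
    rw [hA_def]
    exact (integrable_finset_sum _ fun j _ => hcomp0 j).const_mul _
  have hBint : Integrable Bω P := by
    rw [hB_def]
    exact integrable_finset_sum _ fun j _ => hcomp1 j
  have hAval : ∫ ω, Aω ω ∂P = (n₁ n : ℝ) * I0 := by
    rw [hA_def]
    rw [integral_const_mul, integral_finset_sum _ fun j _ => hcomp0 j]
    simp only [hval0]
    rw [Finset.sum_const, Finset.card_range, nsmul_eq_mul]
    field_simp
  have hBval : ∫ ω, Bω ω ∂P = (n₁ n : ℝ) * I1 := by
    rw [hB_def]
    rw [integral_finset_sum _ fun j _ => hcomp1 j]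
    simp only [hval1]
    rw [Finset.sum_const, Finset.card_range, nsmul_eq_mul]
  have hAnn : 0 ≤ᵐ[P] Aω := Filter.Eventually.of_forall fun ω => by
    rw [hA_def]
    exact mul_nonneg (by positivity) (Finset.sum_nonneg fun j _ => hF0nn _)
  have hBnn : 0 ≤ᵐ[P] Bω := Filter.Eventually.of_forall fun ω =>
    Finset.sum_nonneg fun j _ => hF1nn _
  -- Markov's inequality
  have hc2 : 0 < C * (n₁ n : ℝ) / 2 := by positivity
  have hPA : P {ω | C * (n₁ n : ℝ) / 2 ≤ Aω ω} ≤ ENNReal.ofReal (2 * I0 / C) := by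
    have hmark := mul_meas_ge_le_integral_of_nonneg hAnn hAint (C * (n₁ n : ℝ) / 2)
    rw [hAval] at hmark
    rw [ENNReal.le_ofReal_iff_toReal_le (measure_ne_top _ _)
      (div_nonneg (by linarith) hCpos.le)]
    have heq : (n₁ n : ℝ) * I0 / (C * (n₁ n : ℝ) / 2) = 2 * I0 / C := by
      field_simp
    calc (P {ω | C * (n₁ n : ℝ) / 2 ≤ Aω ω}).toReal
        ≤ (n₁ n : ℝ) * I0 / (C * (n₁ n : ℝ) / 2) := (le_div_iff₀' hc2).mpr hmark
      _ = 2 * I0 / C := heq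
  have hPB : P {ω | C * (n₁ n : ℝ) / 2 ≤ Bω ω} ≤ ENNReal.ofReal (2 * I1 / C) := by
    have hmark := mul_meas_ge_le_integral_of_nonneg hBnn hBint (C * (n₁ n : ℝ) / 2)
    rw [hBval] at hmark
    rw [ENNReal.le_ofReal_iff_toReal_le (measure_ne_top _ _)
      (div_nonneg (by linarith) hCpos.le)]
    have heq : (n₁ n : ℝ) * I1 / (C * (n₁ n : ℝ) / 2) = 2 * I1 / C := by
      field_simp
    calc (P {ω | C * (n₁ n : ℝ) / 2 ≤ Bω ω}).toReal
        ≤ (n₁ n : ℝ) * I1 / (C * (n₁ n : ℝ) / 2) := (le_div_iff₀' hc2).mpr hmark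
      _ = 2 * I1 / C := heq
  -- the inclusion of events
  have hsub : {ω | C * (n₁ n : ℝ) ≤
        |(⨆ θ : {θ : Fin (d + 1) → ℝ //
            Real.sqrt (∑ i, (θ i - θstar i) ^ 2) ≤ (n₁ n : ℝ) ^ (-(1 / 3 : ℝ))},
          |drmThirdDeriv d q X (n₀ n) (n₁ n) θ.1 ω ia ib ic|)|}
      ⊆ {ω | C * (n₁ n : ℝ) / 2 ≤ Aω ω} ∪ {ω | C * (n₁ n : ℝ) / 2 ≤ Bω ω} := by
    intro ω hω
    simp only [Set.mem_setOf_eq] at hω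
    have hZnn : 0 ≤ ⨆ θ : {θ : Fin (d + 1) → ℝ //
        Real.sqrt (∑ i, (θ i - θstar i) ^ 2) ≤ (n₁ n : ℝ) ^ (-(1 / 3 : ℝ))},
        |drmThirdDeriv d q X (n₀ n) (n₁ n) θ.1 ω ia ib ic| :=
      Real.iSup_nonneg fun θ => abs_nonneg _
    rw [abs_of_nonneg hZnn] at hω
    have hZ := hZb ω
    by_contra hcon
    simp only [Set.mem_union, Set.mem_setOf_eq, not_or, not_le] at hcon
    obtain ⟨hA', hB'⟩ := hcon
    linarith only [hω, hZ, hA', hB']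
  have hfin : 2 * I0 / C + 2 * I1 / C ≤ ε := by
    have hεC : ε * C = 2 * (I0 + I1) + ε := by
      rw [hC_def]
      field_simp
    have h2 : 2 * I0 / C + 2 * I1 / C = 2 * (I0 + I1) / C := by ring
    rw [h2, div_le_iff₀ hCpos]
    linarith only [hεC, hε]
  calc P {ω | C * (n₁ n : ℝ) ≤
        |(⨆ θ : {θ : Fin (d + 1) → ℝ //
            Real.sqrt (∑ i, (θ i - θstar i) ^ 2) ≤ (n₁ n : ℝ) ^ (-(1 / 3 : ℝ))},
          |drmThirdDeriv d q X (n₀ n) (n₁ n) θ.1 ω ia ib ic|)|}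
      ≤ P ({ω | C * (n₁ n : ℝ) / 2 ≤ Aω ω} ∪ {ω | C * (n₁ n : ℝ) / 2 ≤ Bω ω}) :=
        measure_mono hsub
    _ ≤ P {ω | C * (n₁ n : ℝ) / 2 ≤ Aω ω} + P {ω | C * (n₁ n : ℝ) / 2 ≤ Bω ω} :=
        measure_union_le _ _
    _ ≤ ENNReal.ofReal (2 * I0 / C) + ENNReal.ofReal (2 * I1 / C) := add_le_add hPA hPB
    _ = ENNReal.ofReal (2 * I0 / C + 2 * I1 / C) :=
        (ENNReal.ofReal_add (div_nonneg (by linarith) hCpos.le)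
          (div_nonneg (by linarith) hCpos.le)).symm
    _ ≤ ENNReal.ofReal ε := ENNReal.ofReal_le_ofReal hfin

end
end
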